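/- arXiv:1810.00353 — 8 statements merged into one kernel-verified Lean document; each statement's English description precedes it below -/
import Mathlib

section
/- Assume the SISDP setting, Slater's constraint qualification with Slater point x̃ (F(x̃) ∈ S^m_{++} and g(x̃,τ) < 0 for all τ ∈ T), and that τ ↦ g(x,τ) and τ ↦ ∇ₓg(x,τ) are continuous for each fixed x. Let x* ∈ ℝⁿ, let W ∈ S^m_+, and let p be a finite nonnegative Borel measure on T such that F(x*) ∈ S^m_+, F(x*)∘W = O, ∫_T g(x*,τ) dp(τ) = 0, and (F₁•W, …, F_n•W)ᵀ − ∫_T ∇ₓg(x*,τ) dp(τ) = 0. Then W = O and p = 0 (i.e., p(T) = 0). -/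
open MeasureTheory Filter Topology

noncomputable def jordan {ι : Type*} [Fintype ι] (X Y : Matrix ι ι ℝ) : Matrix ι ι ℝ :=
  (2:ℝ)⁻¹ • (X * Y + Y * X)

open Matrix

lemma diag_conj_eq {m : ℕ} (S A : Matrix (Fin m) (Fin m) ℝ) (hS : Sᵀ = S) (i : Fin m) :
    (S * A * S) i i = dotProduct (fun j => S j i) (A *ᵥ fun j => S j i) := by
  simp only [Matrix.mul_apply, Matrix.mulVec, dotProduct, Finset.sum_mul,
    Finset.mul_sum]
  rw [Finset.sum_comm]
  refine Finset.sum_congr rfl fun j _ => Finset.sum_congr rfl fun k _ => ?_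
  have h : S i j = S j i := by
    conv_lhs => rw [← hS]
    rfl
  rw [h]; ring

open scoped MatrixOrder in
lemma psd_trace_mul {m : ℕ} {A W : Matrix (Fin m) (Fin m) ℝ}
    (hA : A.PosDef) (hW : W.PosSemidef) :
    0 ≤ (A * W).trace ∧ ((A * W).trace = 0 → W = 0) := by
  set S := CFC.sqrt W with hSdef
  have hS := (CFC.sqrt_nonneg W).posSemidef
  have hSsymm : Sᵀ = S := by
    have h := hS.isHermitian
    simpa [Matrix.IsHermitian] using h
  have hWS : S * S = W := CFC.sqrt_mul_sqrt_self W hW.nonneg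
  have htr : (A * W).trace = (S * A * S).trace := by
    rw [← hWS, ← mul_assoc, Matrix.trace_mul_cycle]
  have hdiag : ∀ i, 0 ≤ (S * A * S) i i := fun i => by
    rw [diag_conj_eq S A hSsymm i]
    simpa using hA.posSemidef.dotProduct_mulVec_nonneg (fun j => S j i)
  constructor
  · rw [htr, Matrix.trace]
    exact Finset.sum_nonneg fun i _ => hdiag i
  · intro h0
    have hsum : ∑ i, (S * A * S) i i = 0 := by
      have := htr.symm.trans h0
      simpa [Matrix.trace] using this
    have hzero : ∀ i ∈ Finset.univ, (S * A * S) i i = 0 :=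
      (Finset.sum_eq_zero_iff_of_nonneg (fun i _ => hdiag i)).mp hsum
    have hScol : ∀ i, (fun j => S j i) = (0 : Fin m → ℝ) := by
      intro i
      by_contra hne
      have hpos := hA.dotProduct_mulVec_pos hne
      have := hzero i (Finset.mem_univ i)
      rw [diag_conj_eq S A hSsymm i] at this
      simp only [star_trivial] at hpos
      linarith
    have hSz : S = 0 := by
      ext j i
      exact congrFun (hScol i) j
    rw [← hWS, hSz, mul_zero]

lemma convex_grad_ineq {n : ℕ} {f : EuclideanSpace ℝ (Fin n) → ℝ}
    (hf : ConvexOn ℝ Set.univ f) {x G : EuclideanSpace ℝ (Fin n)}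
    (hg : HasGradientAt f G x) (y : EuclideanSpace ℝ (Fin n)) :
    f x + (inner ℝ G (y - x) : ℝ) ≤ f y := by
  set φ : ℝ → ℝ := fun t => f (x + t • (y - x)) with hφdef
  have hc : HasDerivAt (fun t : ℝ => x + t • (y - x)) (y - x) 0 := by
    simpa using ((hasDerivAt_id (0:ℝ)).smul_const (y - x)).const_add x
  have hfd : HasFDerivAt f (InnerProductSpace.toDual ℝ _ G) (x + (0:ℝ) • (y - x)) := by
    simpa using hg.hasFDerivAt
  have hφ0 : HasDerivAt φ (inner ℝ G (y - x) : ℝ) 0 := by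
    have := hfd.comp_hasDerivAt 0 hc
    exact this
  have hφconv : ConvexOn ℝ Set.univ φ := by
    have h := hf.comp_affineMap (AffineMap.lineMap x y : ℝ →ᵃ[ℝ] EuclideanSpace ℝ (Fin n))
    have heq : (f ∘ (AffineMap.lineMap x y : ℝ →ᵃ[ℝ] EuclideanSpace ℝ (Fin n))) = φ := by
      funext t
      simp [hφdef, AffineMap.lineMap_apply, add_comm]
    have hpre : ((AffineMap.lineMap x y : ℝ →ᵃ[ℝ] EuclideanSpace ℝ (Fin n)) ⁻¹' Set.univ)
        = (Set.univ : Set ℝ) := by simp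
    rw [heq, hpre] at h
    exact h
  have htend : Tendsto (slope φ 0) (𝓝[>] 0) (𝓝 (inner ℝ G (y - x) : ℝ)) :=
    (hasDerivAt_iff_tendsto_slope.mp hφ0).mono_left
      (nhdsWithin_mono _ (fun z hz => ne_of_gt hz))
  have hle : (inner ℝ G (y - x) : ℝ) ≤ slope φ 0 1 := by
    refine le_of_tendsto htend ?_
    filter_upwards [Ioo_mem_nhdsGT_of_mem (by norm_num : (0:ℝ) ∈ Set.Ico 0 1)] with t ht
    have := hφconv.secant_mono (Set.mem_univ (0:ℝ)) (Set.mem_univ t) (Set.mem_univ (1:ℝ))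
      (ne_of_gt ht.1) one_ne_zero (le_of_lt ht.2)
    simpa [slope_def_field] using this
  have h0 : φ 0 = f x := by simp [hφdef]
  have h1 : φ 1 = f y := by simp [hφdef]
  rw [slope_def_field, h0, h1] at hle
  have : (inner ℝ G (y - x) : ℝ) ≤ f y - f x := by
    have h11 : ((1:ℝ) - 0) = 1 := by norm_num
    rw [h11, div_one] at hle
    exact hle
  linarith

/-- under Slater's CQ, the only multiplier pair (W, p) satisfying the
homogeneous KKT-type system at a feasible-in-SDP point x* is (O, 0). -/
theorem sisdp_multiplier_vanish {n m : ℕ} {T : Type*} [MetricSpace T] [CompactSpace T]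
    [MeasurableSpace T] [BorelSpace T]
    (g : EuclideanSpace ℝ (Fin n) → T → ℝ)
    (hgc : Continuous fun p : EuclideanSpace ℝ (Fin n) × T => g p.1 p.2)
    (hgconv : ∀ τ : T, ConvexOn ℝ Set.univ fun x => g x τ)
    (ggrad : EuclideanSpace ℝ (Fin n) → T → EuclideanSpace ℝ (Fin n))
    (hgg : ∀ x τ, HasGradientAt (fun z => g z τ) (ggrad x τ) x)
    (F0 : Matrix (Fin m) (Fin m) ℝ) (Fmat : Fin n → Matrix (Fin m) (Fin m) ℝ)
    (hF0 : F0.IsSymm) (hFi : ∀ i, (Fmat i).IsSymm)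
    (Fx : EuclideanSpace ℝ (Fin n) → Matrix (Fin m) (Fin m) ℝ)
    (hFx : ∀ x, Fx x = F0 + ∑ i, x i • Fmat i)
    -- Slater point x̃
    (xtilde : EuclideanSpace ℝ (Fin n))
    (hSlater1 : (Fx xtilde).PosDef) (hSlater2 : ∀ τ, g xtilde τ < 0)
    (xstar : EuclideanSpace ℝ (Fin n))
    -- continuity of τ ↦ g(x,τ) and τ ↦ ∇ₓg(x,τ) for each fixed x
    (hgcont : ∀ x : EuclideanSpace ℝ (Fin n), Continuous fun τ => g x τ)
    (hggcont : ∀ x : EuclideanSpace ℝ (Fin n), Continuous fun τ => ggrad x τ)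
    (W : Matrix (Fin m) (Fin m) ℝ) (hW : W.PosSemidef)
    (p : Measure T) [IsFiniteMeasure p]
    (hFpsd : (Fx xstar).PosSemidef)
    (hcompl : jordan (Fx xstar) W = 0)
    (hint : (∫ τ, g xstar τ ∂p) = 0)
    (hstat : ∀ j, (Fmat j * W).trace - (∫ τ, ggrad xstar τ j ∂p) = 0) :
    W = 0 ∧ p = 0 := by
  -- integrability facts
  have hCS : ∀ (f : T → ℝ), Continuous f → Integrable f p := fun f hf =>
    hf.integrable_of_hasCompactSupport
      (IsCompact.of_isClosed_subset isCompact_univ (isClosed_tsupport f) (Set.subset_univ _))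
  have int_gtilde : Integrable (fun τ => g xtilde τ) p := hCS _ (hgcont xtilde)
  have int_gstar : Integrable (fun τ => g xstar τ) p := hCS _ (hgcont xstar)
  have cont_grad_j : ∀ j, Continuous (fun τ => ggrad xstar τ j) := fun j => by
    have := (EuclideanSpace.proj j : EuclideanSpace ℝ (Fin n) →L[ℝ] ℝ).continuous.comp
      (hggcont xstar)
    exact this
  have int_grad_j : ∀ j, Integrable (fun τ => ggrad xstar τ j) p := fun j =>
    hCS _ (cont_grad_j j)
  have cont_inner : Continuous (fun τ => (inner ℝ (ggrad xstar τ) (xtilde - xstar) : ℝ)) :=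
    (hggcont xstar).inner continuous_const
  have int_inner : Integrable (fun τ => (inner ℝ (ggrad xstar τ) (xtilde - xstar) : ℝ)) p :=
    hCS _ cont_inner
  -- Step A : trace (Fx xstar * W) = 0
  have hA : ((Fx xstar) * W).trace = 0 := by
    have h := congrArg Matrix.trace hcompl
    simp only [jordan, Matrix.trace_smul, Matrix.trace_add, Matrix.trace_zero,
      Matrix.trace_mul_comm W (Fx xstar), smul_eq_mul] at h
    linarith
  -- trace expansion
  have key : ∀ x : EuclideanSpace ℝ (Fin n),
      (Fx x * W).trace = (F0 * W).trace + ∑ j, x j * (Fmat j * W).trace := by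
    intro x
    rw [hFx, Matrix.add_mul, Matrix.trace_add, Finset.sum_mul, Matrix.trace_sum]
    congr 1
    refine Finset.sum_congr rfl fun j _ => ?_
    rw [Matrix.smul_mul, Matrix.trace_smul, smul_eq_mul]
  -- Step B
  have hB : (Fx xtilde * W).trace
      = ∑ j, (xtilde j - xstar j) * (Fmat j * W).trace := by
    have h1 := key xtilde
    have h2 := key xstar
    have : (Fx xtilde * W).trace - (Fx xstar * W).trace
        = ∑ j, (xtilde j - xstar j) * (Fmat j * W).trace := by
      rw [h1, h2]
      simp only [sub_mul]
      rw [Finset.sum_sub_distrib]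
      ring
    rw [hA, sub_zero] at this
    exact this
  -- Step C : trace (Fmat j * W) = ∫ grad_j
  have hC : ∀ j, (Fmat j * W).trace = ∫ τ, ggrad xstar τ j ∂p := fun j =>
    sub_eq_zero.mp (hstat j)
  -- Step D
  have hD : (Fx xtilde * W).trace
      = ∫ τ, (inner ℝ (ggrad xstar τ) (xtilde - xstar) : ℝ) ∂p := by
    rw [hB]
    have : ∀ j ∈ Finset.univ, (xtilde j - xstar j) * (Fmat j * W).trace
        = ∫ τ, (xtilde j - xstar j) * ggrad xstar τ j ∂p := by
      intro j _
      rw [hC j, integral_const_mul]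
    rw [Finset.sum_congr rfl this, ← integral_finset_sum _
      (fun j _ => (int_grad_j j).const_mul _)]
    congr 1
  -- Step E : pointwise convexity inequality and integral bound
  have hptwise : ∀ τ, (inner ℝ (ggrad xstar τ) (xtilde - xstar) : ℝ)
      ≤ g xtilde τ - g xstar τ := fun τ => by
    have := convex_grad_ineq (hgconv τ) (hgg xstar τ) xtilde
    linarith
  have hE : (∫ τ, (inner ℝ (ggrad xstar τ) (xtilde - xstar) : ℝ) ∂p)
      ≤ ∫ τ, g xtilde τ ∂p := by
    have h1 : (∫ τ, (inner ℝ (ggrad xstar τ) (xtilde - xstar) : ℝ) ∂p)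
        ≤ ∫ τ, (g xtilde τ - g xstar τ) ∂p :=
      integral_mono int_inner (int_gtilde.sub int_gstar) hptwise
    rwa [integral_sub int_gtilde int_gstar, hint, sub_zero] at h1
  have hF : (∫ τ, g xtilde τ ∂p) ≤ 0 :=
    integral_nonpos fun τ => le_of_lt (hSlater2 τ)
  obtain ⟨htrnn, htrz⟩ := psd_trace_mul hSlater1 hW
  have htr0 : (Fx xtilde * W).trace = 0 := le_antisymm (by rw [hD]; linarith) htrnn
  have hint0 : (∫ τ, g xtilde τ ∂p) = 0 := by
    rw [hD] at htr0
    linarith [hE, hF, htr0 ▸ htrnn]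
  constructor
  · exact htrz htr0
  · -- p = 0
    have hneg : (∫ τ, -g xtilde τ ∂p) = 0 := by
      rw [integral_neg, hint0, neg_zero]
    have hae := (integral_eq_zero_iff_of_nonneg
      (fun τ => le_of_lt (neg_pos.mpr (hSlater2 τ))) int_gtilde.neg).mp hneg
    have huniv : p Set.univ = 0 := by
      have h := hae
      rw [Filter.EventuallyEq, ae_iff] at h
      have hset : {τ : T | ¬ (-g xtilde τ = (0 : T → ℝ) τ)} = Set.univ := by
        ext τ
        simp only [Set.mem_setOf_eq, Set.mem_univ, iff_true, Pi.zero_apply]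
        exact fun hcontra => absurd hcontra (by nlinarith [hSlater2 τ])
      rwa [hset] at h
    exact Measure.measure_univ_eq_zero.mp huniv
end

section
/- Assume the SISDP setting with (x,τ) ↦ g(x,τ) and (x,τ) ↦ ∇ₓg(x,τ) jointly continuous. Let {x^k} ⊂ ℝⁿ, {V_k} ⊂ S^m, {y^k} finite nonnegative Borel measures on T, and {μ_k}, {ε_k} positive sequences with μ_k → 0 and ε_k → 0, such that for every k: F(x^k) ∈ S^m_{++}, V_k ∈ S^m_{++}, max_{τ∈T} max(g(x^k,τ),0) ≤ ε_k, ‖∇f(x^k) + ∫_T ∇ₓg(x^k,τ) dy^k(τ) − (F₁•V_k,…,F_n•V_k)ᵀ‖ ≤ ε_k, |∫_T g(x^k,τ) dy^k(τ)| ≤ ε_k, and ‖F(x^k)∘V_k − μ_k I‖_F ≤ ε_k. Suppose x^k → x*, V_k → V*, and y^k converges to a finite nonnegative Borel measure y* in the weak* sense that ∫_T h dy^k → ∫_T h dy* for every continuous h: T → ℝ. Then (x*, y*, V*) is a KKT point of the SISDP: ∇f(x*) + ∫_T ∇ₓg(x*,τ) dy*(τ) − (F₁•V*,…,F_n•V*)ᵀ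 = 0; F(x*)∘V* = O, F(x*) ∈ S^m_+, V* ∈ S^m_+; ∫_T g(x*,τ) dy*(τ) = 0 and g(x*,τ) ≤ 0 for all τ ∈ T. -/
open MeasureTheory Filter Topology

noncomputable def frobNorm {ι : Type*} [Fintype ι] (A : Matrix ι ι ℝ) : ℝ :=
  Real.sqrt (∑ i, ∑ j, (A i j) ^ 2)

lemma cont_integrable {T : Type*} [MetricSpace T] [CompactSpace T] [MeasurableSpace T]
    [BorelSpace T] (ν : Measure T) [IsFiniteMeasure ν] {h : T → ℝ} (hc : Continuous h) :
    Integrable h ν :=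
  hc.integrable_of_hasCompactSupport (isClosed_tsupport _).isCompact

lemma key_conv {T : Type*} [MetricSpace T] [CompactSpace T] [MeasurableSpace T] [BorelSpace T]
    (y : ℕ → Measure T) (hyfin : ∀ k, IsFiniteMeasure (y k))
    (ystar : Measure T) [IsFiniteMeasure ystar]
    (hy : ∀ h : T → ℝ, Continuous h →
      Tendsto (fun k => ∫ τ, h τ ∂(y k)) atTop (𝓝 (∫ τ, h τ ∂ystar)))
    (H : ℕ → C(T, ℝ)) (Hlim : C(T, ℝ)) (hH : Tendsto H atTop (𝓝 Hlim)) :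
    Tendsto (fun k => ∫ τ, H k τ ∂(y k)) atTop (𝓝 (∫ τ, Hlim τ ∂ystar)) := by
  have hmass : Tendsto (fun k => ((y k) Set.univ).toReal) atTop (𝓝 ((ystar Set.univ).toReal)) := by
    have := hy (fun _ => (1:ℝ)) continuous_const
    simp only [integral_const, smul_eq_mul, mul_one] at this
    exact this
  have h1 : Tendsto (fun k => ‖H k - Hlim‖ * ((y k) Set.univ).toReal) atTop (𝓝 0) := by
    have := (tendsto_iff_norm_sub_tendsto_zero.mp hH).mul hmass
    simpa using this
  have h2 : ∀ k, ‖(∫ τ, H k τ ∂(y k)) - ∫ τ, Hlim τ ∂(y k)‖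
      ≤ ‖H k - Hlim‖ * ((y k) Set.univ).toReal := by
    intro k
    have := hyfin k
    rw [← integral_sub (cont_integrable _ (H k).continuous) (cont_integrable _ Hlim.continuous)]
    refine norm_integral_le_of_norm_le_const (Filter.Eventually.of_forall fun τ => ?_)
    simpa using (H k - Hlim).norm_coe_le_norm τ
  have h3 : Tendsto (fun k => (∫ τ, H k τ ∂(y k)) - ∫ τ, Hlim τ ∂(y k)) atTop (𝓝 0) :=
    squeeze_zero_norm h2 h1
  have h4 := hy Hlim Hlim.continuous
  have := h3.add h4
  simpa using this

lemma entry_abs_le_frobNorm {ι : Type*} [Fintype ι] (A : Matrix ι ι ℝ) (i j : ι) :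
    |A i j| ≤ frobNorm A := by
  rw [← Real.sqrt_sq_eq_abs]
  apply Real.sqrt_le_sqrt
  calc (A i j)^2 ≤ ∑ l, (A i l)^2 :=
        Finset.single_le_sum (f := fun l => (A i l)^2) (fun l _ => sq_nonneg _) (Finset.mem_univ j)
    _ ≤ ∑ l, ∑ r, (A l r)^2 :=
        Finset.single_le_sum (f := fun l => ∑ r, (A l r)^2)
          (fun l _ => Finset.sum_nonneg fun r _ => sq_nonneg _) (Finset.mem_univ i)

lemma posSemidef_of_tendsto {m : ℕ} (A : ℕ → Matrix (Fin m) (Fin m) ℝ)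
    (B : Matrix (Fin m) (Fin m) ℝ) (hA : Tendsto A atTop (𝓝 B))
    (hpd : ∀ k, (A k).PosDef) : B.PosSemidef := by
  rw [Matrix.posSemidef_iff_dotProduct_mulVec]
  constructor
  · have h1 : Tendsto (fun k => (A k).conjTranspose) atTop (𝓝 B.conjTranspose) :=
      ((continuous_id.matrix_conjTranspose).tendsto B).comp hA
    have h2 : (fun k => (A k).conjTranspose) = A := funext fun k => (hpd k).1
    rw [h2] at h1
    exact tendsto_nhds_unique h1 hA
  · intro z
    have hc : Continuous fun M : Matrix (Fin m) (Fin m) ℝ =>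
        dotProduct (star z) (Matrix.mulVec M z) :=
      (continuous_const.dotProduct (continuous_id.matrix_mulVec continuous_const))
    have h1 : Tendsto (fun k => dotProduct (star z) (Matrix.mulVec (A k) z)) atTop
        (𝓝 (dotProduct (star z) (Matrix.mulVec B z))) := (hc.tendsto B).comp hA
    exact ge_of_tendsto' h1 fun k => ((hpd k).posSemidef.dotProduct_mulVec_nonneg z)


set_option maxHeartbeats 1000000 in
/-- any (weak*-)limit of a sequence of approximate BKKT points (with
μ_k → 0 and ε_k → 0) is a KKT point of the SISDP. -/
theorem sisdp_bkkt_limit_is_kkt {n m : ℕ} {T : Type*} [MetricSpace T] [CompactSpace T]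
    [MeasurableSpace T] [BorelSpace T]
    (f : EuclideanSpace ℝ (Fin n) → ℝ)
    (fgrad : EuclideanSpace ℝ (Fin n) → EuclideanSpace ℝ (Fin n))
    (hf : ∀ x, HasGradientAt f (fgrad x) x) (hfgradc : Continuous fgrad)
    (g : EuclideanSpace ℝ (Fin n) → T → ℝ)
    (hgc : Continuous fun q : EuclideanSpace ℝ (Fin n) × T => g q.1 q.2)
    (hgconv : ∀ τ : T, ConvexOn ℝ Set.univ fun x => g x τ)
    (ggrad : EuclideanSpace ℝ (Fin n) → T → EuclideanSpace ℝ (Fin n))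
    (hgg : ∀ x τ, HasGradientAt (fun z => g z τ) (ggrad x τ) x)
    (hggc : Continuous fun q : EuclideanSpace ℝ (Fin n) × T => ggrad q.1 q.2)
    (F0 : Matrix (Fin m) (Fin m) ℝ) (Fmat : Fin n → Matrix (Fin m) (Fin m) ℝ)
    (hF0 : F0.IsSymm) (hFi : ∀ i, (Fmat i).IsSymm)
    (Fx : EuclideanSpace ℝ (Fin n) → Matrix (Fin m) (Fin m) ℝ)
    (hFx : ∀ x, Fx x = F0 + ∑ i, x i • Fmat i)
    -- the sequences
    (x : ℕ → EuclideanSpace ℝ (Fin n)) (V : ℕ → Matrix (Fin m) (Fin m) ℝ)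
    (y : ℕ → Measure T) (hyfin : ∀ k, IsFiniteMeasure (y k))
    (μ ε : ℕ → ℝ) (hμpos : ∀ k, 0 < μ k) (hεpos : ∀ k, 0 < ε k)
    (hμ0 : Tendsto μ atTop (𝓝 0)) (hε0 : Tendsto ε atTop (𝓝 0))
    -- approximate BKKT conditions at each k
    (hFpd : ∀ k, (Fx (x k)).PosDef) (hVpd : ∀ k, (V k).PosDef)
    (hθ : ∀ k, ∀ τ : T, max (g (x k) τ) 0 ≤ ε k)
    (hstat : ∀ k,
      Real.sqrt (∑ j, (fgrad (x k) j + (∫ τ, ggrad (x k) τ j ∂(y k)) - (Fmat j * V k).trace) ^ 2)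
        ≤ ε k)
    (hcs : ∀ k, |∫ τ, g (x k) τ ∂(y k)| ≤ ε k)
    (hjord : ∀ k, frobNorm (jordan (Fx (x k)) (V k) - μ k • (1 : Matrix (Fin m) (Fin m) ℝ)) ≤ ε k)
    -- the limits
    (xstar : EuclideanSpace ℝ (Fin n)) (Vstar : Matrix (Fin m) (Fin m) ℝ)
    (ystar : Measure T) [IsFiniteMeasure ystar]
    (hx : Tendsto x atTop (𝓝 xstar)) (hV : Tendsto V atTop (𝓝 Vstar))
    (hy : ∀ h : T → ℝ, Continuous h →
      Tendsto (fun k => ∫ τ, h τ ∂(y k)) atTop (𝓝 (∫ τ, h τ ∂ystar))) :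
    (∀ j, fgrad xstar j + (∫ τ, ggrad xstar τ j ∂ystar) - (Fmat j * Vstar).trace = 0) ∧
    jordan (Fx xstar) Vstar = 0 ∧ (Fx xstar).PosSemidef ∧ Vstar.PosSemidef ∧
    (∫ τ, g xstar τ ∂ystar) = 0 ∧ (∀ τ : T, g xstar τ ≤ 0) := by
  -- continuity of Fx and limit of Fx (x k)
  have hFxc : Continuous Fx := by
    have hFeq : Fx = fun z => F0 + ∑ i, z i • Fmat i := funext hFx
    rw [hFeq]
    exact continuous_const.add (continuous_finset_sum _ fun i _ =>
      (EuclideanSpace.proj i).continuous.smul continuous_const)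
  have hFlim : Tendsto (fun k => Fx (x k)) atTop (𝓝 (Fx xstar)) :=
    (hFxc.tendsto xstar).comp hx
  -- limits of the integral terms
  have hG : ∀ j : Fin n, Tendsto (fun k => ∫ τ, ggrad (x k) τ j ∂(y k)) atTop
      (𝓝 (∫ τ, ggrad xstar τ j ∂ystar)) := by
    intro j
    set φ : C(EuclideanSpace ℝ (Fin n) × T, ℝ) :=
      ⟨fun q => ggrad q.1 q.2 j, (EuclideanSpace.proj j).continuous.comp hggc⟩ with hφ
    have hcur : Tendsto (fun k => φ.curry (x k)) atTop (𝓝 (φ.curry xstar)) :=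
      (φ.curry.continuous.tendsto xstar).comp hx
    have := key_conv y hyfin ystar hy (fun k => φ.curry (x k)) (φ.curry xstar) hcur
    exact this
  have hgint : Tendsto (fun k => ∫ τ, g (x k) τ ∂(y k)) atTop (𝓝 (∫ τ, g xstar τ ∂ystar)) := by
    set φ : C(EuclideanSpace ℝ (Fin n) × T, ℝ) := ⟨fun q => g q.1 q.2, hgc⟩ with hφ
    have hcur : Tendsto (fun k => φ.curry (x k)) atTop (𝓝 (φ.curry xstar)) :=
      (φ.curry.continuous.tendsto xstar).comp hx
    have := key_conv y hyfin ystar hy (fun k => φ.curry (x k)) (φ.curry xstar) hcur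
    simpa [hφ] using this
  refine ⟨?_, ?_, ?_, ?_, ?_, ?_⟩
  · -- stationarity
    intro j
    have hfg : Tendsto (fun k => fgrad (x k) j) atTop (𝓝 (fgrad xstar j)) :=
      (((EuclideanSpace.proj j).continuous.comp hfgradc).tendsto xstar).comp hx
    have htr : Tendsto (fun k => (Fmat j * V k).trace) atTop (𝓝 ((Fmat j * Vstar).trace)) :=
      (((continuous_const.matrix_mul continuous_id).matrix_trace).tendsto Vstar).comp hV
    have hlim : Tendsto (fun k => fgrad (x k) j + (∫ τ, ggrad (x k) τ j ∂(y k))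
        - (Fmat j * V k).trace) atTop
        (𝓝 (fgrad xstar j + (∫ τ, ggrad xstar τ j ∂ystar) - (Fmat j * Vstar).trace)) :=
      (hfg.add (hG j)).sub htr
    have hbound : ∀ k, ‖fgrad (x k) j + (∫ τ, ggrad (x k) τ j ∂(y k))
        - (Fmat j * V k).trace‖ ≤ ε k := by
      intro k
      refine le_trans ?_ (hstat k)
      rw [Real.norm_eq_abs, ← Real.sqrt_sq_eq_abs]
      exact Real.sqrt_le_sqrt (Finset.single_le_sum
        (f := fun j => (fgrad (x k) j + (∫ τ, ggrad (x k) τ j ∂(y k)) - (Fmat j * V k).trace) ^ 2)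
        (fun _ _ => sq_nonneg _) (Finset.mem_univ j))
    have h0 := squeeze_zero_norm hbound hε0
    exact tendsto_nhds_unique hlim h0
  · -- Jordan product vanishes
    have h1 : Tendsto (fun k => jordan (Fx (x k)) (V k)) atTop
        (𝓝 (jordan (Fx xstar) Vstar)) := by
      unfold jordan
      exact ((hFlim.mul hV).add (hV.mul hFlim)).const_smul _
    have h2 : Tendsto (fun k => μ k • (1 : Matrix (Fin m) (Fin m) ℝ)) atTop
        (𝓝 (0 : Matrix (Fin m) (Fin m) ℝ)) := by
      have := hμ0.smul (tendsto_const_nhds (x := (1 : Matrix (Fin m) (Fin m) ℝ)))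
      simpa using this
    have h3 : Tendsto (fun k => jordan (Fx (x k)) (V k) - μ k • (1 : Matrix (Fin m) (Fin m) ℝ))
        atTop (𝓝 (jordan (Fx xstar) Vstar)) := by
      have := h1.sub h2
      simpa using this
    ext i j
    have h4 : Tendsto (fun k => (jordan (Fx (x k)) (V k)
        - μ k • (1 : Matrix (Fin m) (Fin m) ℝ)) i j) atTop
        (𝓝 ((jordan (Fx xstar) Vstar) i j)) :=
      tendsto_pi_nhds.mp (tendsto_pi_nhds.mp h3 i) j
    have h5 : ∀ k, ‖(jordan (Fx (x k)) (V k)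
        - μ k • (1 : Matrix (Fin m) (Fin m) ℝ)) i j‖ ≤ ε k := fun k =>
      le_trans (by rw [Real.norm_eq_abs]; exact entry_abs_le_frobNorm _ i j) (hjord k)
    have h6 := squeeze_zero_norm h5 hε0
    simpa using tendsto_nhds_unique h4 h6
  · exact posSemidef_of_tendsto _ _ hFlim hFpd
  · exact posSemidef_of_tendsto _ _ hV hVpd
  · -- complementary slackness
    have h5 : ∀ k, ‖∫ τ, g (x k) τ ∂(y k)‖ ≤ ε k := fun k => by
      simpa [Real.norm_eq_abs] using hcs k
    exact tendsto_nhds_unique hgint (squeeze_zero_norm h5 hε0)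
  · -- feasibility
    intro τ
    have h1 : Tendsto (fun k => g (x k) τ) atTop (𝓝 (g xstar τ)) :=
      (hgc.tendsto (xstar, τ)).comp (hx.prodMk_nhds tendsto_const_nhds)
    have h2 : ∀ k, g (x k) τ ≤ ε k := fun k => le_trans (le_max_left _ _) (hθ k τ)
    exact le_of_tendsto_of_tendsto' h1 hε0 h2
end

section
/- Let X, Y ∈ S^m_{++} be such that the Jordan product X∘Y is also positive definite. Then for every nonzero symmetric matrix D, Tr(D·(X∘(Y∘D))) + Tr(D·(Y∘(X∘D))) > 0; that is, the operator L_X L_Y + L_Y L_X is positive definite on S^m, where L_X(Z) := X∘Z. -/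
open Matrix

lemma psd_diag' {m : ℕ} {M : Matrix (Fin m) (Fin m) ℝ} (hM : M.PosSemidef) (j : Fin m) :
    0 ≤ M j j := by
  exact hM.diag_nonneg

lemma psd_trace_nonneg' {m : ℕ} {M : Matrix (Fin m) (Fin m) ℝ} (hM : M.PosSemidef) :
    0 ≤ M.trace :=
  Finset.sum_nonneg fun j _ => psd_diag' hM j

lemma trace_mul_psd_nonneg' {m : ℕ} {M N : Matrix (Fin m) (Fin m) ℝ} (hM : M.PosSemidef)
    (hN : N.PosSemidef) : 0 ≤ (M * N).trace := by
  obtain ⟨S, hs, hSS⟩ : ∃ S : Matrix (Fin m) (Fin m) ℝ, S.PosSemidef ∧ S * S = N := by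
    open scoped MatrixOrder in
    exact ⟨CFC.sqrt N, (CFC.sqrt_nonneg N).posSemidef, CFC.sqrt_mul_sqrt_self N hN.nonneg⟩
  have h1 : M * N = M * (S * S) := by rw [hSS]
  rw [h1, ← Matrix.mul_assoc, Matrix.trace_mul_comm]
  have h2 : S * (M * S) = S * M * Sᴴ := by
    rw [hs.isHermitian.eq, Matrix.mul_assoc]
  rw [h2]
  exact psd_trace_nonneg' (hM.mul_mul_conjTranspose_same S)

lemma trace_DAD_pos' {m : ℕ} {A D : Matrix (Fin m) (Fin m) ℝ} (hA : A.PosDef)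
    (hD : D.IsSymm) (hD0 : D ≠ 0) : 0 < (D * A * D).trace := by
  obtain ⟨i, j, hij⟩ : ∃ i j, D i j ≠ 0 := by
    by_contra h
    push_neg at h
    exact hD0 (by ext i j; simpa using h i j)
  set v : Fin m → ℝ := fun i => D i j with hv
  have hvne : v ≠ 0 := fun h => hij (congrFun h i)
  have hpos : 0 < v ⬝ᵥ (A *ᵥ v) := by simpa using hA.dotProduct_mulVec_pos hvne
  have hdiag : (D * A * D) j j = v ⬝ᵥ (A *ᵥ v) := by
    simp only [Matrix.mul_apply, dotProduct, Matrix.mulVec, Finset.sum_mul,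
      Finset.mul_sum]
    rw [Finset.sum_comm]
    refine Finset.sum_congr rfl fun k _ => Finset.sum_congr rfl fun l _ => ?_
    rw [← hD.apply j k]
    simp only [hv]
    ring
  have hDsymm : D * A * Dᴴ = D * A * D := by
    rw [Matrix.conjTranspose_eq_transpose_of_trivial, hD.eq]
  have hpsd : (D * A * D).PosSemidef := by
    rw [← hDsymm]; exact hA.posSemidef.mul_mul_conjTranspose_same D
  have hle : (D * A * D) j j ≤ (D * A * D).trace := by
    apply Finset.single_le_sum (f := fun k => (D * A * D) k k)
    · intro k _; exact psd_diag' hpsd k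
    · exact Finset.mem_univ j
  linarith [hdiag ▸ hpos]

/-- if X, Y and X∘Y are positive definite, the operator
L_X L_Y + L_Y L_X is positive definite on S^m. -/
theorem jordan_operator_posdef {m : ℕ} (X Y : Matrix (Fin m) (Fin m) ℝ)
    (hX : X.PosDef) (hY : Y.PosDef) (hXY : (jordan X Y).PosDef) :
    ∀ D : Matrix (Fin m) (Fin m) ℝ, D.IsSymm → D ≠ 0 →
      0 < (D * jordan X (jordan Y D)).trace + (D * jordan Y (jordan X D)).trace := by
  intro D hD hD0
  have key : (D * jordan X (jordan Y D)).trace + (D * jordan Y (jordan X D)).trace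
      = (D * jordan X Y * D).trace + ((D * X * D) * Y).trace := by
    have hac : (D * (X * (Y * D))).trace = (D * (D * (X * Y))).trace := by
      rw [show D * (X * (Y * D)) = (D * (X * Y)) * D by simp [Matrix.mul_assoc],
          Matrix.trace_mul_comm]
    have hac' : (D * (Y * (X * D))).trace = (D * (D * (Y * X))).trace := by
      rw [show D * (Y * (X * D)) = (D * (Y * X)) * D by simp [Matrix.mul_assoc],
          Matrix.trace_mul_comm]
    have hb : (D * (X * (D * Y))).trace = (D * (Y * (D * X))).trace := by
      rw [show D * (X * (D * Y)) = (D * X) * (D * Y) by simp [Matrix.mul_assoc],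
          show D * (Y * (D * X)) = (D * Y) * (D * X) by simp [Matrix.mul_assoc],
          Matrix.trace_mul_comm]
    simp only [jordan, Matrix.mul_smul, Matrix.smul_mul, Matrix.mul_add, Matrix.add_mul,
      Matrix.trace_add, Matrix.trace_smul, smul_eq_mul, Matrix.mul_assoc]
    linarith
  rw [key]
  have h1 : 0 < (D * jordan X Y * D).trace := trace_DAD_pos' hXY hD hD0
  have h2 : 0 ≤ ((D * X * D) * Y).trace := by
    have hDsymm : D * X * Dᴴ = D * X * D := by
      rw [Matrix.conjTranspose_eq_transpose_of_trivial, hD.eq]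
    have hpsd : (D * X * D).PosSemidef := by
      rw [← hDsymm]; exact hX.posSemidef.mul_mul_conjTranspose_same D
    exact trace_mul_psd_nonneg' hpsd hY.posSemidef
  linarith
end

section
/- Let A, B ∈ S^m_{++} and let F₁,…,F_n ∈ S^m be linearly independent. Assume either (i) there exist μ > 0 and θ ∈ [0,1) with ‖A∘B − μI‖_F ≤ θμ, or (ii) AB = BA. For each j = 1,…,n let M_j, G_j ∈ S^m be the (unique) symmetric matrices satisfying A∘M_j = F_j and A∘G_j = B∘F_j, and define the n×n matrix H by H_{ij} := (1/2)·Tr(F_i·(G_j + B∘M_j)). Then H is positive definite as a quadratic form: for every nonzero Δx ∈ ℝⁿ, Σ_{i,j} Δxᵢ Δx_j H_{ij} > 0. -/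
open Matrix in
lemma trace_mul_jordan {k : ℕ} (X Y Z : Matrix (Fin k) (Fin k) ℝ) :
    (X * jordan Y Z).trace = (jordan Y X * Z).trace := by
  simp only [jordan, Matrix.mul_smul, Matrix.smul_mul, Matrix.trace_smul, mul_add, add_mul,
    Matrix.trace_add, smul_eq_mul, ← mul_assoc]
  rw [Matrix.trace_mul_cycle X Z Y, Matrix.trace_mul_cycle Y X Z]
  ring

open Matrix in
lemma jordan_sum_smul {k n : ℕ} (X : Matrix (Fin k) (Fin k) ℝ) (c : Fin n → ℝ)
    (Y : Fin n → Matrix (Fin k) (Fin k) ℝ) :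
    jordan X (∑ i, c i • Y i) = ∑ i, c i • jordan X (Y i) := by
  simp [jordan, Matrix.mul_sum, Matrix.sum_mul, Finset.smul_sum, Matrix.mul_smul,
    Matrix.smul_mul, ← Finset.sum_add_distrib, smul_add, smul_smul, mul_comm]

open Matrix in
lemma conj_diag {k : ℕ} (C N : Matrix (Fin k) (Fin k) ℝ) (j : Fin k) :
    (Nᵀ * C * N) j j = star (fun i => N i j) ⬝ᵥ (C *ᵥ (fun i => N i j)) := by
  simp only [Matrix.mul_apply, Matrix.transpose_apply, dotProduct, Matrix.mulVec,
    star_trivial, Finset.sum_mul, Finset.mul_sum]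
  rw [Finset.sum_comm]
  apply Finset.sum_congr rfl; intro i _
  apply Finset.sum_congr rfl; intro l _
  ring

open Matrix in
lemma trace_conj_nonneg {k : ℕ} (C N : Matrix (Fin k) (Fin k) ℝ) (hC : C.PosSemidef) :
    0 ≤ (Nᵀ * C * N).trace := by
  rw [Matrix.trace]
  refine Finset.sum_nonneg fun j _ => ?_
  rw [Matrix.diag_apply, conj_diag]
  exact hC.dotProduct_mulVec_nonneg _

open Matrix in
lemma trace_conj_pos {k : ℕ} (C N : Matrix (Fin k) (Fin k) ℝ) (hC : C.PosDef) (hN : N ≠ 0) :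
    0 < (Nᵀ * C * N).trace := by
  obtain ⟨i0, j0, hij⟩ : ∃ i j, N i j ≠ 0 := by
    by_contra h; push_neg at h; exact hN (by ext i j; simpa using h i j)
  rw [Matrix.trace]
  refine Finset.sum_pos' (fun j _ => by
    rw [Matrix.diag_apply, conj_diag]; exact hC.posSemidef.dotProduct_mulVec_nonneg _) ⟨j0, Finset.mem_univ _, ?_⟩
  rw [Matrix.diag_apply, conj_diag]
  exact hC.dotProduct_mulVec_pos (fun h0 => hij (congrFun h0 i0))

open Matrix in
lemma trace_MAMB_nonneg {k : ℕ} (A B M : Matrix (Fin k) (Fin k) ℝ)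
    (hA : A.PosDef) (hB : B.PosDef) (hM : Mᵀ = M) :
    0 ≤ (M * A * M * B).trace := by
  obtain ⟨S, hSt, hSS⟩ : ∃ S : Matrix (Fin k) (Fin k) ℝ, Sᵀ = S ∧ S * S = A := by
    open scoped MatrixOrder in
    refine ⟨CFC.sqrt A, ?_, CFC.sqrt_mul_sqrt_self A hA.posSemidef.nonneg⟩
    rw [← Matrix.conjTranspose_eq_transpose_of_trivial]
    open scoped MatrixOrder in
    exact (CFC.sqrt_nonneg A).posSemidef.1
  have key : ((M * S)ᵀ * B * (M * S)).trace = (M * A * M * B).trace := by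
    rw [Matrix.transpose_mul, hSt, hM]
    calc (S * M * B * (M * S)).trace
        = (S * (M * B * M) * S).trace := by congr 1; simp only [mul_assoc]
      _ = (S * (S * (M * B * M))).trace := by rw [Matrix.trace_mul_comm]
      _ = (A * (M * B * M)).trace := by rw [← mul_assoc, hSS]
      _ = (M * B * M * A).trace := by rw [Matrix.trace_mul_comm]
      _ = (A * (M * B) * M).trace := by rw [Matrix.trace_mul_cycle (M*B) M A]
      _ = (M * A * (M * B)).trace := by rw [Matrix.trace_mul_cycle A (M*B) M]
      _ = (M * A * M * B).trace := by congr 1; simp only [mul_assoc]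
  rw [← key]
  exact trace_conj_nonneg _ _ hB.posSemidef

open Matrix in
lemma mul_posDef_of_commute {k : ℕ} (A B : Matrix (Fin k) (Fin k) ℝ)
    (hA : A.PosDef) (hB : B.PosDef) (hcomm : A * B = B * A) : (A * B).PosDef := by
  have hAt : Aᵀ = A := by
    rw [← Matrix.conjTranspose_eq_transpose_of_trivial]; exact hA.1
  have hBt : Bᵀ = B := by
    rw [← Matrix.conjTranspose_eq_transpose_of_trivial]; exact hB.1
  have hC : (A * B).IsHermitian := by
    rw [Matrix.IsHermitian, Matrix.conjTranspose_eq_transpose_of_trivial,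
      Matrix.transpose_mul, hAt, hBt, hcomm]
  have hev : ∀ i, 0 < hC.eigenvalues i := by
    intro i
    set v : Fin k → ℝ := ⇑(hC.eigenvectorBasis i) with hv
    have hvne : v ≠ 0 := by rw [hv, Ne, WithLp.ofLp_eq_zero]; exact hC.eigenvectorBasis.orthonormal.ne_zero i
    have h1 : (A * B) *ᵥ v = hC.eigenvalues i • v := hC.mulVec_eigenvectorBasis i
    have h2 : B *ᵥ v = hC.eigenvalues i • (A⁻¹ *ᵥ v) := by
      have hB' : B = A⁻¹ * (A * B) := by
        rw [← mul_assoc, Matrix.nonsing_inv_mul A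
          ((Matrix.isUnit_iff_isUnit_det A).mp hA.isUnit), one_mul]
      conv_lhs => rw [hB']
      rw [← Matrix.mulVec_mulVec, h1, Matrix.mulVec_smul]
    have h3 : 0 < v ⬝ᵥ B *ᵥ v := by simpa using hB.dotProduct_mulVec_pos hvne
    have h4 : 0 < v ⬝ᵥ A⁻¹ *ᵥ v := by simpa using hA.inv.dotProduct_mulVec_pos hvne
    rw [h2, dotProduct_smul, smul_eq_mul] at h3
    rcases mul_pos_iff.mp h3 with ⟨h, _⟩ | ⟨_, h⟩
    · exact h
    · linarith
  have hPSD : (A * B).PosSemidef := hC.posSemidef_iff_eigenvalues_nonneg.mpr fun i => (hev i).le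
  refine Matrix.PosDef.of_dotProduct_mulVec_pos hC fun x hx => lt_of_le_of_ne (by simpa using hPSD.dotProduct_mulVec_nonneg x) fun h0 => hx ?_
  have h1 := (hPSD.dotProduct_mulVec_zero_iff x).mp (by simpa using h0.symm)
  have hinj := Matrix.mulVec_injective_iff_isUnit.mpr (hA.isUnit.mul hB.isUnit)
  exact hinj (a₁ := x) (a₂ := 0) (by simpa using h1)

open Matrix in
lemma quadform_abs_le {k : ℕ} (E : Matrix (Fin k) (Fin k) ℝ) (x : Fin k → ℝ) :
    |x ⬝ᵥ E *ᵥ x| ≤ frobNorm E * (∑ i, x i ^ 2) := by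
  have hxx : (0:ℝ) ≤ ∑ i, x i ^ 2 := Finset.sum_nonneg fun i _ => sq_nonneg _
  have hexp : x ⬝ᵥ E *ᵥ x = ∑ p : Fin k × Fin k, E p.1 p.2 * (x p.1 * x p.2) := by
    rw [Fintype.sum_prod_type]
    simp only [dotProduct, Matrix.mulVec, Finset.mul_sum]
    apply Finset.sum_congr rfl; intro i _
    apply Finset.sum_congr rfl; intro j _
    ring
  have hcs := Finset.sum_mul_sq_le_sq_mul_sq Finset.univ
    (fun p : Fin k × Fin k => E p.1 p.2) (fun p => x p.1 * x p.2)
  have hg : (∑ p : Fin k × Fin k, (x p.1 * x p.2) ^ 2) = (∑ i, x i ^ 2) ^ 2 := by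
    rw [Fintype.sum_prod_type, sq (∑ i, x i ^ 2), Finset.sum_mul]
    apply Finset.sum_congr rfl; intro i _
    rw [Finset.mul_sum]
    apply Finset.sum_congr rfl; intro j _
    ring
  have hf : (∑ p : Fin k × Fin k, (E p.1 p.2) ^ 2) = ∑ i, ∑ j, E i j ^ 2 :=
    Fintype.sum_prod_type _
  rw [hexp]
  have habs : |∑ p : Fin k × Fin k, E p.1 p.2 * (x p.1 * x p.2)| ≤
      Real.sqrt ((∑ i, ∑ j, E i j ^ 2) * (∑ i, x i ^ 2) ^ 2) := by
    rw [← Real.sqrt_sq_eq_abs]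
    apply Real.sqrt_le_sqrt
    rw [← hf, ← hg]
    exact hcs
  refine habs.trans ?_
  rw [Real.sqrt_mul' _ (pow_nonneg hxx 2),
    Real.sqrt_sq hxx]
  rfl

open Matrix in
lemma jordan_posDef_of_frob {k : ℕ} (A B : Matrix (Fin k) (Fin k) ℝ)
    (hA : A.PosDef) (hB : B.PosDef) (μ θ : ℝ) (hμ : 0 < μ) (hθ1 : θ < 1)
    (hfrob : frobNorm (jordan A B - μ • (1 : Matrix (Fin k) (Fin k) ℝ)) ≤ θ * μ) :
    (jordan A B).PosDef := by
  have hAt : Aᵀ = A := by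
    rw [← Matrix.conjTranspose_eq_transpose_of_trivial]; exact hA.1
  have hBt : Bᵀ = B := by
    rw [← Matrix.conjTranspose_eq_transpose_of_trivial]; exact hB.1
  have hC : (jordan A B).IsHermitian := by
    rw [Matrix.IsHermitian, Matrix.conjTranspose_eq_transpose_of_trivial, jordan,
      Matrix.transpose_smul, Matrix.transpose_add, Matrix.transpose_mul, Matrix.transpose_mul,
      hAt, hBt, add_comm]
  refine Matrix.PosDef.of_dotProduct_mulVec_pos hC fun x hx => ?_
  set E := jordan A B - μ • (1 : Matrix (Fin k) (Fin k) ℝ) with hE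
  have hsplit : x ⬝ᵥ (jordan A B) *ᵥ x = x ⬝ᵥ E *ᵥ x + μ * (∑ i, x i ^ 2) := by
    have h5 : jordan A B = E + μ • (1 : Matrix (Fin k) (Fin k) ℝ) := by
      rw [hE, sub_add_cancel]
    rw [h5, Matrix.add_mulVec, dotProduct_add, Matrix.smul_mulVec,
      Matrix.one_mulVec, dotProduct_smul, smul_eq_mul]
    congr 1
    simp [dotProduct, sq]
  have hxx : (0:ℝ) < ∑ i, x i ^ 2 := by
    obtain ⟨i0, hi0⟩ : ∃ i, x i ≠ 0 := by
      by_contra h; push_neg at h; exact hx (funext h)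
    exact Finset.sum_pos' (fun i _ => sq_nonneg _)
      ⟨i0, Finset.mem_univ _, by positivity⟩
  have habs := quadform_abs_le E x
  have hEb : frobNorm E ≤ θ * μ := hfrob
  have h1 : x ⬝ᵥ E *ᵥ x ≥ -(θ * μ * (∑ i, x i ^ 2)) := by
    have := neg_abs_le (x ⬝ᵥ E *ᵥ x)
    nlinarith [habs, hxx, frobNorm E, hEb]
  simp only [star_trivial]
  rw [hsplit]
  have key : 0 < μ * (∑ i, x i ^ 2) - θ * (μ * (∑ i, x i ^ 2)) := by
    nlinarith [mul_pos hμ hxx]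
  nlinarith [key, h1]

open Matrix in
lemma trace_expand_jordan {k : ℕ} (A B M : Matrix (Fin k) (Fin k) ℝ) :
    (M * jordan B (jordan A M)).trace =
      (2:ℝ)⁻¹ * ((M * M * jordan A B).trace + (M * A * M * B).trace) := by
  simp only [jordan, Matrix.mul_smul, Matrix.smul_mul, mul_add, add_mul, Matrix.trace_smul,
    Matrix.trace_add, smul_eq_mul, ← mul_assoc]
  have e1 : (M * B * A * M).trace = (M * M * B * A).trace := by
    rw [Matrix.trace_mul_comm (M * B * A) M]
    congr 1; simp only [mul_assoc]
  have e2 : (M * B * M * A).trace = (M * A * M * B).trace := by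
    calc (M * B * M * A).trace = (A * (M * B * M)).trace := Matrix.trace_mul_comm _ _
      _ = (A * M * B * M).trace := by congr 1; simp only [mul_assoc]
      _ = (M * (A * M * B)).trace := Matrix.trace_mul_comm _ _
      _ = (M * A * M * B).trace := by congr 1; simp only [mul_assoc]
  rw [e1, e2]
  ring

/-- positive definiteness of the matrix H = ((1/2) Fᵢ • (L_A⁻¹L_B + L_B L_A⁻¹) F_j)
under either a centrality condition or commutativity of A and B. -/
theorem H_matrix_posdef {m n : ℕ} (A B : Matrix (Fin m) (Fin m) ℝ)
    (hA : A.PosDef) (hB : B.PosDef)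
    (Fmat : Fin n → Matrix (Fin m) (Fin m) ℝ)
    (hFsym : ∀ j, (Fmat j).IsSymm)
    (hFind : LinearIndependent ℝ Fmat)
    (hyp : (∃ μ : ℝ, 0 < μ ∧ ∃ θ : ℝ, 0 ≤ θ ∧ θ < 1 ∧
        frobNorm (jordan A B - μ • (1 : Matrix (Fin m) (Fin m) ℝ)) ≤ θ * μ) ∨
      A * B = B * A)
    (Mmat Gmat : Fin n → Matrix (Fin m) (Fin m) ℝ)
    (hMsym : ∀ j, (Mmat j).IsSymm) (hGsym : ∀ j, (Gmat j).IsSymm)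
    (hM : ∀ j, jordan A (Mmat j) = Fmat j)
    (hG : ∀ j, jordan A (Gmat j) = jordan B (Fmat j))
    (H : Matrix (Fin n) (Fin n) ℝ)
    (hH : ∀ i j, H i j = (1 / 2) * (Fmat i * (Gmat j + jordan B (Mmat j))).trace) :
    ∀ Δx : Fin n → ℝ, Δx ≠ 0 → 0 < ∑ i, ∑ j, Δx i * Δx j * H i j := by
  intro c hc
  set F : Matrix (Fin m) (Fin m) ℝ := ∑ i, c i • Fmat i with hFdef
  set M : Matrix (Fin m) (Fin m) ℝ := ∑ i, c i • Mmat i with hMdef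
  set G : Matrix (Fin m) (Fin m) ℝ := ∑ i, c i • Gmat i with hGdef
  have hFA : jordan A M = F := by
    rw [hMdef, jordan_sum_smul, hFdef]
    exact Finset.sum_congr rfl fun i _ => by rw [hM i]
  have hGA : jordan A G = jordan B F := by
    rw [hGdef, jordan_sum_smul, hFdef, jordan_sum_smul]
    exact Finset.sum_congr rfl fun i _ => by rw [hG i]
  have hFne : F ≠ 0 := by
    intro h0
    exact hc (funext fun i => Fintype.linearIndependent_iff.mp hFind c (by rw [← hFdef]; exact h0) i)
  have hMne : M ≠ 0 := by
    intro h0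
    apply hFne
    rw [← hFA, h0]
    simp [jordan]
  have hMsymm : M.transpose = M := by
    rw [hMdef, Matrix.transpose_sum]
    exact Finset.sum_congr rfl fun i _ => by rw [Matrix.transpose_smul, (hMsym i)]
  -- Step A
  have QA : ∑ i, ∑ j, c i * c j * H i j = (2:ℝ)⁻¹ * (F * (G + jordan B M)).trace := by
    have hsum : G + jordan B M = ∑ j, c j • (Gmat j + jordan B (Mmat j)) := by
      rw [hGdef, hMdef, jordan_sum_smul, ← Finset.sum_add_distrib]
      exact Finset.sum_congr rfl fun i _ => by rw [smul_add]
    rw [hsum, hFdef, Matrix.sum_mul, Matrix.trace_sum, Finset.mul_sum]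
    apply Finset.sum_congr rfl; intro i _
    simp only [Matrix.smul_mul, Matrix.mul_sum, Matrix.mul_smul, Matrix.trace_smul,
      Matrix.trace_sum, smul_eq_mul, Finset.mul_sum, hH]
    apply Finset.sum_congr rfl; intro j _
    ring
  -- Step B
  have hFBM : (F * jordan B M).trace = (F * G).trace := by
    calc (F * jordan B M).trace = (jordan B F * M).trace := trace_mul_jordan F B M
      _ = (jordan A G * M).trace := by rw [hGA]
      _ = (G * jordan A M).trace := (trace_mul_jordan G A M).symm
      _ = (G * F).trace := by rw [hFA]
      _ = (F * G).trace := Matrix.trace_mul_comm G F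
  -- Step C
  have hFG : (F * G).trace = (M * jordan B (jordan A M)).trace := by
    conv_lhs => rw [← hFA]
    calc (jordan A M * G).trace = (M * jordan A G).trace := (trace_mul_jordan M A G).symm
      _ = (M * jordan B F).trace := by rw [hGA]
      _ = (M * jordan B (jordan A M)).trace := by rw [hFA]
  -- combine
  have QB : ∑ i, ∑ j, c i * c j * H i j =
      (2:ℝ)⁻¹ * ((M * M * jordan A B).trace + (M * A * M * B).trace) := by
    rw [QA, mul_add, Matrix.trace_add, hFBM, ← trace_expand_jordan A B M, ← hFG]
    ring
  rw [QB]
  -- positivity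
  have hCpd : (jordan A B).PosDef := by
    rcases hyp with ⟨μ, hμ, θ, hθ0, hθ1, hfrob⟩ | hcomm
    · exact jordan_posDef_of_frob A B hA hB μ θ hμ hθ1 hfrob
    · have : jordan A B = A * B := by
        rw [jordan, hcomm, ← two_smul ℝ (B * A), smul_smul]
        norm_num
      rw [this]
      exact mul_posDef_of_commute A B hA hB hcomm
  have hpos1 : 0 < (M * M * jordan A B).trace := by
    have h := trace_conj_pos (jordan A B) M hCpd hMne
    rw [hMsymm, Matrix.trace_mul_cycle M (jordan A B) M] at h
    exact h
  have hpos2 : 0 ≤ (M * A * M * B).trace := trace_MAMB_nonneg A B M hA hB hMsymm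
  positivity
end

section
/- Let (X*, Y*) ∈ S^m_+ × S^m_+ satisfy strict complementarity: X*∘Y* = O and X* + Y* ∈ S^m_{++}. Let μ_r > 0 with μ_r → 0 and let (X_r, Y_r) ∈ S^m_{++} × S^m_{++} with (X_r,Y_r) → (X*,Y*), and suppose there exist C > 0 and ζ > 0 such that ‖X_r∘Y_r − μ_r I‖_F ≤ C·μ_r^{1+ζ} for all r. Then there exist M > 0 and R such that for all r ≥ R and all Z ∈ S^m: ‖X_r∘(Y_r∘Z) − Y_r∘(X_r∘Z)‖_F ≤ M·μ_r^{ζ}·‖X_r∘Z‖_F. (Equivalently, ‖L_{X_r}L_{Y_r}L_{X_r}^{-1} − L_{Y_r}‖₂ = O(μ_r^{ζ}), where L_X(Z) := X∘Z and ‖·‖₂ is the operator norm induced by ‖·‖_F on S^m.) -/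
open Filter Topology

namespace CommAux

open Matrix

variable {ι : Type*} [Fintype ι]

noncomputable def n2 (A : Matrix ι ι ℝ) : ℝ := ∑ i, ∑ j, (A i j) ^ 2

lemma n2_nonneg (A : Matrix ι ι ℝ) : 0 ≤ n2 A := by
  refine Finset.sum_nonneg fun i _ => Finset.sum_nonneg fun j _ => sq_nonneg _

lemma frobNorm_def (A : Matrix ι ι ℝ) : frobNorm A = Real.sqrt (n2 A) := rfl

lemma frobNorm_nonneg (A : Matrix ι ι ℝ) : 0 ≤ frobNorm A := Real.sqrt_nonneg _

lemma sq_frobNorm (A : Matrix ι ι ℝ) : frobNorm A ^ 2 = n2 A := by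
  rw [frobNorm_def, Real.sq_sqrt (n2_nonneg A)]

lemma cs2 (f g : ι → ι → ℝ) :
    (∑ i, ∑ j, f i j * g i j) ^ 2 ≤ (∑ i, ∑ j, f i j ^ 2) * (∑ i, ∑ j, g i j ^ 2) := by
  have h := Finset.sum_mul_sq_le_sq_mul_sq Finset.univ
    (fun p : ι × ι => f p.1 p.2) (fun p : ι × ι => g p.1 p.2)
  simpa [Fintype.sum_prod_type] using h

lemma ip_le (A B : Matrix ι ι ℝ) :
    ∑ i, ∑ j, A i j * B i j ≤ frobNorm A * frobNorm B := by
  have h := cs2 (fun i j => A i j) (fun i j => B i j)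
  calc ∑ i, ∑ j, A i j * B i j ≤ |∑ i, ∑ j, A i j * B i j| := le_abs_self _
    _ = Real.sqrt ((∑ i, ∑ j, A i j * B i j) ^ 2) := (Real.sqrt_sq_eq_abs _).symm
    _ ≤ Real.sqrt (n2 A * n2 B) := Real.sqrt_le_sqrt h
    _ = frobNorm A * frobNorm B := by
        rw [Real.sqrt_mul (n2_nonneg A), frobNorm_def, frobNorm_def]

lemma frobNorm_add_le (A B : Matrix ι ι ℝ) :
    frobNorm (A + B) ≤ frobNorm A + frobNorm B := by
  have key : n2 (A + B) ≤ (frobNorm A + frobNorm B) ^ 2 := by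
    have h1 : n2 (A + B) = n2 A + 2 * (∑ i, ∑ j, A i j * B i j) + n2 B := by
      simp only [n2, Matrix.add_apply, Finset.mul_sum]
      rw [← Finset.sum_add_distrib, ← Finset.sum_add_distrib]
      refine Finset.sum_congr rfl fun i _ => ?_
      rw [← Finset.sum_add_distrib, ← Finset.sum_add_distrib]
      exact Finset.sum_congr rfl fun j _ => by ring
    have h2 := ip_le A B
    have := sq_frobNorm A; have := sq_frobNorm B
    nlinarith [frobNorm_nonneg A, frobNorm_nonneg B]
  calc frobNorm (A + B) = Real.sqrt (n2 (A + B)) := rfl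
    _ ≤ Real.sqrt ((frobNorm A + frobNorm B) ^ 2) := Real.sqrt_le_sqrt key
    _ = frobNorm A + frobNorm B := by
        rw [Real.sqrt_sq (add_nonneg (frobNorm_nonneg A) (frobNorm_nonneg B))]

lemma frobNorm_smul (c : ℝ) (A : Matrix ι ι ℝ) : frobNorm (c • A) = |c| * frobNorm A := by
  have : n2 (c • A) = c ^ 2 * n2 A := by
    simp only [n2, Matrix.smul_apply, smul_eq_mul, mul_pow, Finset.mul_sum]
  rw [frobNorm_def, this, Real.sqrt_mul (sq_nonneg c), Real.sqrt_sq_eq_abs, frobNorm_def]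

lemma frobNorm_sub_le (A B : Matrix ι ι ℝ) :
    frobNorm (A - B) ≤ frobNorm A + frobNorm B := by
  have h := frobNorm_add_le A (-B)
  have hneg : frobNorm (-B) = frobNorm B := by
    have := frobNorm_smul (-1 : ℝ) B
    simpa using this
  rw [sub_eq_add_neg]
  simpa [hneg] using h

lemma frobNorm_mul_le (A B : Matrix ι ι ℝ) :
    frobNorm (A * B) ≤ frobNorm A * frobNorm B := by
  have key : n2 (A * B) ≤ n2 A * n2 B := by
    have h1 : ∀ i j, ((A * B) i j) ^ 2 ≤ (∑ k, A i k ^ 2) * (∑ k, B k j ^ 2) := by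
      intro i j
      rw [Matrix.mul_apply]
      exact Finset.sum_mul_sq_le_sq_mul_sq Finset.univ _ _
    calc n2 (A * B) ≤ ∑ i, ∑ j, (∑ k, A i k ^ 2) * (∑ k, B k j ^ 2) := by
          exact Finset.sum_le_sum fun i _ => Finset.sum_le_sum fun j _ => h1 i j
      _ = (∑ i, ∑ k, A i k ^ 2) * (∑ j, ∑ k, B k j ^ 2) := by
          rw [Finset.sum_mul]
          exact Finset.sum_congr rfl fun i _ => by rw [← Finset.mul_sum]
      _ = n2 A * n2 B := by
          rw [n2, n2]; congr 1; exact Finset.sum_comm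
  have h := Real.sqrt_le_sqrt key
  rw [Real.sqrt_mul (n2_nonneg A)] at h
  exact h

lemma abs_dot_le (A : Matrix ι ι ℝ) (u v : ι → ℝ) (hu : ∑ i, u i ^ 2 = 1)
    (hv : ∑ i, v i ^ 2 = 1) : abs (u ⬝ᵥ (A *ᵥ v)) ≤ frobNorm A := by
  have h1 : (u ⬝ᵥ (A *ᵥ v)) ^ 2 ≤ (∑ i, u i ^ 2) * ∑ i, (A *ᵥ v) i ^ 2 :=
    Finset.sum_mul_sq_le_sq_mul_sq Finset.univ _ _
  have h2 : ∑ i, (A *ᵥ v) i ^ 2 ≤ n2 A := by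
    have : ∀ i, (A *ᵥ v) i ^ 2 ≤ (∑ j, A i j ^ 2) * ∑ j, v j ^ 2 :=
      fun i => Finset.sum_mul_sq_le_sq_mul_sq Finset.univ _ _
    calc ∑ i, (A *ᵥ v) i ^ 2 ≤ ∑ i, (∑ j, A i j ^ 2) * ∑ j, v j ^ 2 :=
          Finset.sum_le_sum fun i _ => this i
      _ = n2 A := by simp [hv, n2]
  calc abs (u ⬝ᵥ (A *ᵥ v)) = Real.sqrt ((u ⬝ᵥ (A *ᵥ v)) ^ 2) := (Real.sqrt_sq_eq_abs _).symm
    _ ≤ Real.sqrt (n2 A) := Real.sqrt_le_sqrt (by rw [hu] at h1; linarith)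
    _ = frobNorm A := rfl


lemma trace_mul_self_symm {M : Matrix ι ι ℝ} (h : Mᵀ = M) : Matrix.trace (M * M) = n2 M := by
  have hM : ∀ i k, M k i = M i k := fun i k => by
    conv_lhs => rw [← h]
    rw [Matrix.transpose_apply]
  simp only [Matrix.trace, Matrix.diag, Matrix.mul_apply, n2]
  refine Finset.sum_congr rfl fun i _ => Finset.sum_congr rfl fun k _ => by
    rw [hM i k]; ring

lemma trace_mul_self_skew {M : Matrix ι ι ℝ} (h : Mᵀ = -M) : Matrix.trace (M * M) = -n2 M := by
  have hM : ∀ i k, M k i = -M i k := fun i k => by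
    have := congrFun (congrFun h i) k
    simpa [Matrix.transpose_apply] using this
  simp only [Matrix.trace, Matrix.diag, Matrix.mul_apply, n2, ← Finset.sum_neg_distrib]
  refine Finset.sum_congr rfl fun i _ => Finset.sum_congr rfl fun k _ => by
    rw [hM i k]; ring

lemma trace_sym_skew {S A : Matrix ι ι ℝ} (hS : Sᵀ = S) (hA : Aᵀ = -A) :
    Matrix.trace (S * A) = 0 := by
  have h1 : Matrix.trace (S * A) = Matrix.trace ((S * A)ᵀ) := (Matrix.trace_transpose _).symm
  rw [Matrix.transpose_mul, hS, hA, Matrix.neg_mul, Matrix.trace_neg,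
    Matrix.trace_mul_comm] at h1
  rw [Matrix.trace_mul_comm]
  linarith

variable [DecidableEq ι]

open scoped MatrixOrder in
lemma trace_sq_nonneg {X : Matrix ι ι ℝ} (hX : X.PosDef) (Y : Matrix ι ι ℝ)
    (hY : Yᵀ = Y) (μ : ℝ) :
    0 ≤ Matrix.trace ((X * Y - μ • 1) * (X * Y - μ • 1)) := by
  set s := CFC.sqrt X with hs_def
  have hss : s * s = X := CFC.sqrt_mul_sqrt_self X hX.posSemidef.nonneg
  have hssym : sᵀ = s := by
    have := (Matrix.nonneg_iff_posSemidef.mp (CFC.sqrt_nonneg X)).1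
    rwa [Matrix.IsHermitian, Matrix.conjTranspose_eq_transpose_of_trivial] at this
  have hdet : IsUnit s.det := by
    have hXdet : (0:ℝ) < X.det := hX.det_pos
    have : s.det * s.det = X.det := by rw [← Matrix.det_mul, hss]
    refine isUnit_iff_ne_zero.mpr fun h0 => ?_
    rw [h0, mul_zero] at this; linarith [this ▸ hXdet]
  have hinv1 : s * s⁻¹ = 1 := Matrix.mul_nonsing_inv s hdet
  have hinv2 : s⁻¹ * s = 1 := Matrix.nonsing_inv_mul s hdet
  set M := s * Y * s - μ • 1 with hM_def
  have hMsym : Mᵀ = M := by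
    rw [hM_def, Matrix.transpose_sub, Matrix.transpose_smul, Matrix.transpose_one,
      Matrix.transpose_mul, Matrix.transpose_mul, hssym, hY, Matrix.mul_assoc]
  have key : X * Y - μ • (1 : Matrix ι ι ℝ) = s * M * s⁻¹ := by
    have h1 : s * M * s⁻¹ = s * (s * Y * s) * s⁻¹ - μ • (s * s⁻¹) := by
      rw [hM_def]
      simp only [mul_sub, sub_mul, mul_smul_comm, smul_mul_assoc, Matrix.mul_one]
    have h2 : s * (s * Y * s) * s⁻¹ = X * Y := by
      simp only [← Matrix.mul_assoc]
      rw [hss, Matrix.mul_assoc (X * Y) s s⁻¹, hinv1, Matrix.mul_one]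
    rw [h1, h2, hinv1]
  have key2 : (X * Y - μ • (1 : Matrix ι ι ℝ)) * (X * Y - μ • 1) = s * (M * M) * s⁻¹ := by
    rw [key]
    simp only [Matrix.mul_assoc, Matrix.nonsing_inv_mul_cancel_left _ _ hdet]
  rw [key2, Matrix.trace_mul_cycle, ← Matrix.mul_assoc, hinv2, Matrix.one_mul,
    trace_mul_self_symm hMsym]
  exact n2_nonneg M

lemma comm_bound {X Y : Matrix ι ι ℝ} (hX : X.PosDef) (hXt : Xᵀ = X) (hY : Yᵀ = Y) (μ : ℝ) :
    frobNorm (X * Y - Y * X) ≤ 2 * frobNorm (jordan X Y - μ • 1) := by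
  set S := jordan X Y - μ • (1 : Matrix ι ι ℝ) with hS_def
  set A := (2:ℝ)⁻¹ • (X * Y - Y * X) with hA_def
  have hSA : X * Y - μ • (1 : Matrix ι ι ℝ) = S + A := by
    rw [hS_def, hA_def, jordan]; module
  have hSsym : Sᵀ = S := by
    rw [hS_def, jordan, Matrix.transpose_sub, Matrix.transpose_smul, Matrix.transpose_smul,
      Matrix.transpose_one, Matrix.transpose_add, Matrix.transpose_mul, Matrix.transpose_mul,
      hXt, hY, add_comm (Y * X)]
  have hAskew : Aᵀ = -A := by
    rw [hA_def, Matrix.transpose_smul, Matrix.transpose_sub, Matrix.transpose_mul,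
      Matrix.transpose_mul, hXt, hY]
    module
  have htr : 0 ≤ Matrix.trace ((X * Y - μ • (1 : Matrix ι ι ℝ)) * (X * Y - μ • 1)) :=
    trace_sq_nonneg hX Y hY μ
  rw [hSA] at htr
  have hexp : Matrix.trace ((S + A) * (S + A)) = n2 S - n2 A := by
    rw [Matrix.add_mul, Matrix.mul_add, Matrix.mul_add, Matrix.trace_add, Matrix.trace_add,
      Matrix.trace_add, trace_mul_self_symm hSsym, trace_mul_self_skew hAskew,
      trace_sym_skew hSsym hAskew, Matrix.trace_mul_comm A S, trace_sym_skew hSsym hAskew]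
    ring
  rw [hexp] at htr
  have hfrob : frobNorm A ≤ frobNorm S := by
    rw [frobNorm_def, frobNorm_def]
    exact Real.sqrt_le_sqrt (by linarith)
  have h2A : X * Y - Y * X = (2:ℝ) • A := by rw [hA_def]; module
  rw [h2A, frobNorm_smul]
  rw [hS_def] at hfrob
  calc |(2:ℝ)| * frobNorm A ≤ 2 * frobNorm A := by rw [abs_of_pos]; norm_num
    _ ≤ 2 * frobNorm (jordan X Y - μ • 1) := by linarith


lemma quad_lower {X : Matrix ι ι ℝ} (hX : X.IsHermitian) {l : ℝ}
    (h : ∀ j, l ≤ hX.eigenvalues j) (v : ι → ℝ) :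
    l * (∑ i, v i ^ 2) ≤ v ⬝ᵥ (X *ᵥ v) := by
  have hpsd : (X - l • 1).PosSemidef := by
    have hspec := hX.spectral_theorem
    simp only [Unitary.conjStarAlgAut_apply, Unitary.coe_star] at hspec
    set U := (hX.eigenvectorUnitary : Matrix ι ι ℝ) with hU_def
    have hUU : U * star U = 1 := (Matrix.mem_unitaryGroup_iff).mp hX.eigenvectorUnitary.2
    have hXd : X - l • 1 = U * Matrix.diagonal (fun i => hX.eigenvalues i - l) * Uᴴ := by
      have hdiag : Matrix.diagonal (fun i => hX.eigenvalues i - l)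
          = Matrix.diagonal (RCLike.ofReal ∘ hX.eigenvalues) - l • (1 : Matrix ι ι ℝ) := by
        ext i j
        rcases eq_or_ne i j with rfl | hij
        · simp [Matrix.diagonal_apply_eq, Matrix.one_apply_eq]
        · simp [Matrix.diagonal_apply_ne _ hij, Matrix.one_apply_ne hij]
      rw [hdiag, mul_sub, sub_mul, mul_smul_comm, smul_mul_assoc, Matrix.mul_one,
        ← Matrix.star_eq_conjTranspose, hUU, ← hspec]
    rw [hXd]
    exact (Matrix.posSemidef_diagonal_iff.mpr fun i => sub_nonneg.mpr (h i)).mul_mul_conjTranspose_same U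
  have h2 := hpsd.dotProduct_mulVec_nonneg v
  have hexp : star v ⬝ᵥ ((X - l • 1) *ᵥ v) = v ⬝ᵥ (X *ᵥ v) - l * (∑ i, v i ^ 2) := by
    rw [star_trivial, Matrix.sub_mulVec, dotProduct_sub]
    congr 1
    rw [Matrix.smul_mulVec, Matrix.one_mulVec, dotProduct_smul]
    simp [dotProduct, pow_two, smul_eq_mul]
  rw [hexp] at h2
  linarith

lemma ip_jordan (X Z : Matrix ι ι ℝ) (hZ : Zᵀ = Z) :
    ∑ i, ∑ j, Z i j * (jordan X Z) i j
      = ∑ j, (fun i => Z i j) ⬝ᵥ (X *ᵥ fun i => Z i j) := by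
  have hZs : ∀ a b, Z b a = Z a b := fun a b => by
    conv_lhs => rw [← hZ]
    rw [Matrix.transpose_apply]
  have hL : ∑ i, ∑ j, Z i j * (jordan X Z) i j
      = (2:ℝ)⁻¹ * ((∑ p : ι × ι × ι, Z p.1 p.2.1 * (X p.1 p.2.2 * Z p.2.2 p.2.1))
        + (∑ p : ι × ι × ι, Z p.1 p.2.1 * (Z p.1 p.2.2 * X p.2.2 p.2.1))) := by
    simp only [jordan, Matrix.smul_apply, Matrix.add_apply, Matrix.mul_apply, smul_eq_mul,
      Fintype.sum_prod_type, ← Finset.sum_add_distrib, Finset.mul_sum]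
    refine Finset.sum_congr rfl fun i _ => Finset.sum_congr rfl fun j _ =>
      Finset.sum_congr rfl fun k _ => by ring
  have hR : ∑ j, (fun i => Z i j) ⬝ᵥ (X *ᵥ fun i => Z i j)
      = ∑ p : ι × ι × ι, Z p.2.1 p.1 * (X p.2.1 p.2.2 * Z p.2.2 p.1) := by
    simp only [dotProduct, Matrix.mulVec, Fintype.sum_prod_type, Finset.mul_sum]
  have e1 : ∑ p : ι × ι × ι, Z p.1 p.2.1 * (X p.1 p.2.2 * Z p.2.2 p.2.1)
      = ∑ p : ι × ι × ι, Z p.2.1 p.1 * (X p.2.1 p.2.2 * Z p.2.2 p.1) := by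
    apply Fintype.sum_equiv
      (⟨fun p => (p.2.1, p.1, p.2.2), fun p => (p.2.1, p.1, p.2.2),
        fun p => rfl, fun p => rfl⟩ : (ι × ι × ι) ≃ (ι × ι × ι))
    intro p
    rfl
  have e2 : ∑ p : ι × ι × ι, Z p.1 p.2.1 * (Z p.1 p.2.2 * X p.2.2 p.2.1)
      = ∑ p : ι × ι × ι, Z p.2.1 p.1 * (X p.2.1 p.2.2 * Z p.2.2 p.1) := by
    apply Fintype.sum_equiv
      (⟨fun p => (p.1, p.2.2, p.2.1), fun p => (p.1, p.2.2, p.2.1),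
        fun p => rfl, fun p => rfl⟩ : (ι × ι × ι) ≃ (ι × ι × ι))
    intro p
    simp only [Equiv.coe_fn_mk]
    rw [hZs p.1 p.2.2, hZs p.1 p.2.1]
    ring
  rw [hL, hR, e1, e2]
  ring


lemma jordan_comm_identity (X Y Z : Matrix ι ι ℝ) :
    jordan X (jordan Y Z) - jordan Y (jordan X Z)
      = (4:ℝ)⁻¹ • ((X * Y - Y * X) * Z - Z * (X * Y - Y * X)) := by
  simp only [jordan, smul_add, smul_sub, sub_mul, mul_sub, add_mul, mul_add,
    smul_mul_assoc, mul_smul_comm, smul_smul, ← Matrix.mul_assoc]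
  module

end CommAux



set_option maxHeartbeats 1000000 in
open Matrix in
/-- under strict complementarity and the centrality rate
‖X_r∘Y_r − μ_r I‖_F ≤ C μ_r^{1+ζ}, one has
‖L_{X_r}L_{Y_r}L_{X_r}⁻¹ − L_{Y_r}‖₂ = O(μ_r^ζ). -/
theorem commutator_operator_bound {m : ℕ}
    (Xstar Ystar : Matrix (Fin m) (Fin m) ℝ)
    (hXs : Xstar.PosSemidef) (hYs : Ystar.PosSemidef)
    (hcomp : jordan Xstar Ystar = 0) (hstrict : (Xstar + Ystar).PosDef)
    (μ : ℕ → ℝ) (hμpos : ∀ r, 0 < μ r) (hμ0 : Tendsto μ atTop (𝓝 0))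
    (X Y : ℕ → Matrix (Fin m) (Fin m) ℝ)
    (hXpd : ∀ r, (X r).PosDef) (hYpd : ∀ r, (Y r).PosDef)
    (hXlim : Tendsto X atTop (𝓝 Xstar)) (hYlim : Tendsto Y atTop (𝓝 Ystar))
    (C ζ : ℝ) (hC : 0 < C) (hζ : 0 < ζ)
    (hrate : ∀ r,
      frobNorm (jordan (X r) (Y r) - μ r • (1 : Matrix (Fin m) (Fin m) ℝ)) ≤ C * μ r ^ (1 + ζ)) :
    ∃ M : ℝ, 0 < M ∧ ∃ R : ℕ, ∀ r ≥ R, ∀ Z : Matrix (Fin m) (Fin m) ℝ, Z.IsSymm →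
      frobNorm (jordan (X r) (jordan (Y r) Z) - jordan (Y r) (jordan (X r) Z))
        ≤ M * μ r ^ ζ * frobNorm (jordan (X r) Z) := by
  classical
  set B : ℝ := frobNorm Ystar + 1 with hB_def
  have hYsnn : 0 ≤ frobNorm Ystar := CommAux.frobNorm_nonneg Ystar
  have hB1 : (1:ℝ) ≤ B := by rw [hB_def]; linarith
  have hBpos : (0:ℝ) < B := by linarith
  have hfncont : Continuous (fun A : Matrix (Fin m) (Fin m) ℝ => frobNorm A) := by
    unfold frobNorm
    apply Real.continuous_sqrt.comp
    exact continuous_finset_sum _ fun i _ => continuous_finset_sum _ fun j _ =>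
      (continuous_id.matrix_elem i j).pow 2
  have hYfrob : Tendsto (fun r => frobNorm (Y r)) atTop (𝓝 (frobNorm Ystar)) :=
    (hfncont.tendsto _).comp hYlim
  have hYB : ∀ᶠ r in atTop, frobNorm (Y r) ≤ B :=
    hYfrob.eventually_le_const (by rw [hB_def]; linarith)
  have hμζ0 : Tendsto (fun r => C * μ r ^ ζ) atTop (𝓝 0) := by
    have h1 : Tendsto (fun r => (μ r) ^ ζ) atTop (𝓝 ((0:ℝ) ^ ζ)) :=
      (Real.continuousAt_rpow_const 0 ζ (Or.inr hζ.le)).tendsto.comp hμ0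
    rw [Real.zero_rpow hζ.ne'] at h1
    simpa using h1.const_mul C
  have hμsmall : ∀ᶠ r in atTop, C * μ r ^ ζ ≤ 1/2 :=
    hμζ0.eventually_le_const (by norm_num)
  obtain ⟨R, hR⟩ := Filter.eventually_atTop.mp (hYB.and hμsmall)
  refine ⟨2 * B * C, by positivity, R, fun r hr Z hZsym => ?_⟩
  obtain ⟨hYB_r, hμ_r⟩ := hR r hr
  have hμr : 0 < μ r := hμpos r
  have hXsym : (X r)ᵀ = X r := by
    have := (hXpd r).1
    rwa [Matrix.IsHermitian, Matrix.conjTranspose_eq_transpose_of_trivial] at this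
  have hYsym : (Y r)ᵀ = Y r := by
    have := (hYpd r).1
    rwa [Matrix.IsHermitian, Matrix.conjTranspose_eq_transpose_of_trivial] at this
  set E := jordan (X r) (Y r) - μ r • (1 : Matrix (Fin m) (Fin m) ℝ) with hE_def
  have hrpow : μ r ^ ((1:ℝ)+ζ) = μ r * μ r ^ ζ := by
    rw [Real.rpow_add hμr, Real.rpow_one]
  have hEC : frobNorm E ≤ C * μ r ^ ((1:ℝ)+ζ) := hrate r
  have hEhalf : frobNorm E ≤ μ r / 2 := by
    have h1 : C * μ r ^ ((1:ℝ)+ζ) = (C * μ r ^ ζ) * μ r := by rw [hrpow]; ring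
    have h2 : (C * μ r ^ ζ) * μ r ≤ (1/2) * μ r :=
      mul_le_mul_of_nonneg_right hμ_r hμr.le
    calc frobNorm E ≤ C * μ r ^ ((1:ℝ)+ζ) := hEC
      _ ≤ (1/2) * μ r := by rw [h1]; exact h2
      _ = μ r / 2 := by ring
  have hherm := (hXpd r).1
  -- every eigenvalue of X r is at least μ r / (2 B)
  have heig : ∀ j, μ r / (2*B) ≤ hherm.eigenvalues j := by
    intro j
    set u : Fin m → ℝ := ⇑(hherm.eigenvectorBasis j) with hu_def
    set lam := hherm.eigenvalues j with hlam_def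
    have hXu : X r *ᵥ u = lam • u := hherm.mulVec_eigenvectorBasis j
    have hnorm1 : ∑ i, u i ^ 2 = 1 := by
      have h1 : ‖hherm.eigenvectorBasis j‖ = 1 := hherm.eigenvectorBasis.orthonormal.1 j
      have h2 : ‖hherm.eigenvectorBasis j‖ ^ 2 = ∑ i, u i ^ 2 := by
        rw [EuclideanSpace.norm_eq, Real.sq_sqrt (by positivity)]
        simp [hu_def, Real.norm_eq_abs, sq_abs]
      rw [h1] at h2
      simpa using h2.symm
    have hune : u ≠ 0 := by
      intro h0
      rw [h0] at hnorm1
      simp at hnorm1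
    have hq : 0 < u ⬝ᵥ (Y r *ᵥ u) := by
      have := (hYpd r).dotProduct_mulVec_pos hune
      simpa using this
    have hqB : u ⬝ᵥ (Y r *ᵥ u) ≤ B :=
      le_trans (le_trans (le_abs_self _) (CommAux.abs_dot_le (Y r) u u hnorm1 hnorm1)) hYB_r
    have hvm : u ᵥ* (X r) = lam • u := by
      conv_lhs => rw [← hXsym]
      rw [Matrix.vecMul_transpose, hXu]
    have hjord : u ⬝ᵥ ((jordan (X r) (Y r)) *ᵥ u) = lam * (u ⬝ᵥ (Y r *ᵥ u)) := by
      have h1 : (jordan (X r) (Y r)) *ᵥ u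
          = (2:ℝ)⁻¹ • ((X r * Y r) *ᵥ u + (Y r * X r) *ᵥ u) := by
        rw [jordan, Matrix.smul_mulVec, Matrix.add_mulVec]
      have h2 : (Y r * X r) *ᵥ u = lam • (Y r *ᵥ u) := by
        rw [← Matrix.mulVec_mulVec, hXu, Matrix.mulVec_smul]
      have h3 : u ⬝ᵥ ((X r * Y r) *ᵥ u) = lam * (u ⬝ᵥ (Y r *ᵥ u)) := by
        rw [← Matrix.mulVec_mulVec, Matrix.dotProduct_mulVec, hvm,
          smul_dotProduct, smul_eq_mul]
      rw [h1, dotProduct_smul, dotProduct_add, h3, h2,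
        dotProduct_smul, smul_eq_mul, smul_eq_mul]
      ring
    have hdot1 : u ⬝ᵥ u = 1 := by
      simpa [dotProduct, pow_two] using hnorm1
    have hEdot : -(frobNorm E) ≤ u ⬝ᵥ (E *ᵥ u) := by
      have h1 := CommAux.abs_dot_le E u u hnorm1 hnorm1
      have h2 := neg_abs_le (u ⬝ᵥ (E *ᵥ u))
      linarith
    have hcent : μ r - frobNorm E ≤ u ⬝ᵥ ((jordan (X r) (Y r)) *ᵥ u) := by
      have hsplit : jordan (X r) (Y r) = E + μ r • 1 := by rw [hE_def]; abel
      rw [hsplit, Matrix.add_mulVec, dotProduct_add, Matrix.smul_mulVec,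
        Matrix.one_mulVec, dotProduct_smul, smul_eq_mul, hdot1]
      linarith
    have h6 : μ r / 2 ≤ lam * (u ⬝ᵥ (Y r *ᵥ u)) := by
      rw [← hjord]
      linarith
    have hlam : 0 < lam := by nlinarith
    rw [div_le_iff₀ (by linarith : (0:ℝ) < 2*B)]
    nlinarith [mul_le_mul_of_nonneg_left hqB hlam.le]
  have hquad : ∀ v : Fin m → ℝ, μ r / (2*B) * (∑ i, v i ^ 2) ≤ v ⬝ᵥ (X r *ᵥ v) :=
    CommAux.quad_lower hherm heig
  set J := jordan (X r) Z with hJ_def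
  have hZsymT : Zᵀ = Z := hZsym
  have hfZ : 0 ≤ frobNorm Z := CommAux.frobNorm_nonneg Z
  have hfJ : 0 ≤ frobNorm J := CommAux.frobNorm_nonneg J
  have hlow : μ r / (2*B) * CommAux.n2 Z ≤ ∑ i, ∑ j, Z i j * J i j := by
    rw [hJ_def, CommAux.ip_jordan (X r) Z hZsymT]
    calc μ r / (2*B) * CommAux.n2 Z = ∑ j, μ r / (2*B) * (∑ i, (Z i j)^2) := by
          rw [← Finset.mul_sum, CommAux.n2]
          congr 1
          exact Finset.sum_comm
      _ ≤ ∑ j, (fun i => Z i j) ⬝ᵥ (X r *ᵥ fun i => Z i j) :=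
          Finset.sum_le_sum fun j _ => hquad _
  have hZJ : μ r * frobNorm Z ≤ 2*B*frobNorm J := by
    have h1 : μ r / (2*B) * (frobNorm Z)^2 ≤ frobNorm Z * frobNorm J := by
      rw [CommAux.sq_frobNorm]
      exact le_trans hlow (CommAux.ip_le Z J)
    rcases eq_or_lt_of_le hfZ with h0 | h0
    · rw [← h0, mul_zero]
      positivity
    · rw [div_mul_eq_mul_div, div_le_iff₀ (by linarith : (0:ℝ) < 2*B)] at h1
      nlinarith
  have hK := CommAux.comm_bound (hXpd r) hXsym hYsym (μ r)
  have hid := CommAux.jordan_comm_identity (X r) (Y r) Z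
  set K := X r * Y r - Y r * X r with hK_def
  have hDbound : frobNorm (jordan (X r) (jordan (Y r) Z) - jordan (Y r) (jordan (X r) Z))
      ≤ (2:ℝ)⁻¹ * (frobNorm K * frobNorm Z) := by
    rw [hid, CommAux.frobNorm_smul]
    have h1 := CommAux.frobNorm_sub_le (K * Z) (Z * K)
    have h2 := CommAux.frobNorm_mul_le K Z
    have h3 := CommAux.frobNorm_mul_le Z K
    have habs : |(4:ℝ)⁻¹| = 4⁻¹ := by norm_num
    rw [habs]
    nlinarith [CommAux.frobNorm_nonneg (K * Z - Z * K)]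
  have hKE : frobNorm K ≤ 2 * (C * μ r ^ ((1:ℝ)+ζ)) := by
    calc frobNorm K ≤ 2 * frobNorm (jordan (X r) (Y r) - μ r • 1) := hK
      _ ≤ 2 * (C * μ r ^ ((1:ℝ)+ζ)) := by linarith [hEC]
  have hrpownn : 0 ≤ μ r ^ ζ := Real.rpow_nonneg hμr.le ζ
  calc frobNorm (jordan (X r) (jordan (Y r) Z) - jordan (Y r) (jordan (X r) Z))
      ≤ (2:ℝ)⁻¹ * (frobNorm K * frobNorm Z) := hDbound
    _ ≤ (2:ℝ)⁻¹ * (2 * (C * μ r ^ ((1:ℝ)+ζ)) * frobNorm Z) := by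
        have := mul_le_mul_of_nonneg_right hKE hfZ
        nlinarith
    _ = C * μ r ^ ζ * (μ r * frobNorm Z) := by rw [hrpow]; ring
    _ ≤ C * μ r ^ ζ * (2*B*frobNorm J) := by
        exact mul_le_mul_of_nonneg_left hZJ (by positivity)
    _ = 2 * B * C * μ r ^ ζ * frobNorm J := by ring
end

section
/- Let 0 < ζ < 1 and 0 < ζ̂ < 1, let {(X_r, Y_r)} ⊂ S^m_{++} × S^m_{++}, {(ΔX_r, ΔY_r)} ⊂ S^m × S^m, and let {μ_r}, {μ̂_r} be positive sequences with μ_r → 0 and μ̂_r → 0. Suppose there is C > 0 such that for all r: ‖ΔX_r∘ΔY_r‖_F ≤ C·μ_r², ‖X_r∘Y_r − μ_r I‖_F ≤ C·μ_r^{1+ζ}, and ‖Z_r − μ̂_r I‖_F ≤ C·μ̂_r^{1+ζ̂}, where Z_r := X_r∘Y_r + X_r∘ΔY_r + Y_r∘ΔX_r; suppose further μ_r²/μ̂_r → 0. Then for all sufficiently large r, X_r + ΔX_r ∈ S^m_{++} and Y_r + ΔY_r ∈ S^m_{++}. -/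
open Filter Topology

open Matrix

section Frob
variable {ι : Type*} [Fintype ι]

noncomputable def toE (A : Matrix ι ι ℝ) : EuclideanSpace ℝ (ι × ι) :=
  (WithLp.equiv 2 _).symm (fun p : ι × ι => A p.1 p.2)

lemma toE_add (A B : Matrix ι ι ℝ) : toE (A + B) = toE A + toE B := rfl

lemma toE_smul (c : ℝ) (A : Matrix ι ι ℝ) : toE (c • A) = c • toE A := rfl

lemma frobNorm_eq (A : Matrix ι ι ℝ) : frobNorm A = ‖toE A‖ := by
  rw [EuclideanSpace.norm_eq, frobNorm]
  congr 1
  rw [Fintype.sum_prod_type]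
  refine Finset.sum_congr rfl fun i _ => Finset.sum_congr rfl fun j _ => ?_
  simp [toE, Real.norm_eq_abs, sq_abs]

lemma frobNorm_nonneg (A : Matrix ι ι ℝ) : 0 ≤ frobNorm A := Real.sqrt_nonneg _

lemma frobNorm_add_le (A B : Matrix ι ι ℝ) : frobNorm (A + B) ≤ frobNorm A + frobNorm B := by
  rw [frobNorm_eq, frobNorm_eq, frobNorm_eq, toE_add]; exact norm_add_le _ _

lemma frobNorm_smul (c : ℝ) (A : Matrix ι ι ℝ) : frobNorm (c • A) = |c| * frobNorm A := by
  rw [frobNorm_eq, frobNorm_eq, toE_smul, norm_smul, Real.norm_eq_abs]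

lemma sq_frobNorm (A : Matrix ι ι ℝ) : frobNorm A ^ 2 = ∑ i, ∑ j, A i j ^ 2 :=
  Real.sq_sqrt (by positivity)

end Frob

lemma abs_dot_le {m : ℕ} (B : Matrix (Fin m) (Fin m) ℝ) (v : Fin m → ℝ) :
    |v ⬝ᵥ (B *ᵥ v)| ≤ frobNorm B * ∑ i, v i ^ 2 := by
  have h0 : v ⬝ᵥ (B *ᵥ v) = ∑ p : Fin m × Fin m, (v p.1 * v p.2) * B p.1 p.2 := by
    rw [Fintype.sum_prod_type]
    simp only [dotProduct, Matrix.mulVec, Finset.mul_sum]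
    exact Finset.sum_congr rfl fun i _ => Finset.sum_congr rfl fun j _ => by ring
  have cs := Finset.sum_mul_sq_le_sq_mul_sq Finset.univ
      (fun p : Fin m × Fin m => v p.1 * v p.2) (fun p => B p.1 p.2)
  have hv2 : ∑ p : Fin m × Fin m, (v p.1 * v p.2) ^ 2 = (∑ i, v i ^ 2) ^ 2 := by
    rw [Fintype.sum_prod_type, sq, Finset.sum_mul_sum]
    exact Finset.sum_congr rfl fun i _ => Finset.sum_congr rfl fun j _ => by ring
  have hb2 : ∑ p : Fin m × Fin m, (B p.1 p.2) ^ 2 = frobNorm B ^ 2 := by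
    rw [sq_frobNorm, Fintype.sum_prod_type]
  rw [hv2, hb2, ← mul_pow] at cs
  rw [← h0, ← sq_abs (v ⬝ᵥ B *ᵥ v)] at cs
  rw [mul_comm]
  exact (pow_le_pow_iff_left₀ (abs_nonneg _) (mul_nonneg (by positivity) (frobNorm_nonneg B)) two_ne_zero).mp cs

section PD
variable {m : ℕ}

lemma real_isHermitian {M : Matrix (Fin m) (Fin m) ℝ} (h : Mᵀ = M) : M.IsHermitian := by
  rw [Matrix.IsHermitian, Matrix.conjTranspose_eq_transpose_of_trivial]; exact h

lemma posDef_of (M : Matrix (Fin m) (Fin m) ℝ) (h1 : Mᵀ = M)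
    (h2 : ∀ v : Fin m → ℝ, v ≠ 0 → 0 < v ⬝ᵥ (M *ᵥ v)) : M.PosDef := by
  refine Matrix.PosDef.of_dotProduct_mulVec_pos (real_isHermitian h1) fun x hx => ?_
  simpa using h2 x hx

lemma posDef_dot {M : Matrix (Fin m) (Fin m) ℝ} (hM : M.PosDef) (v : Fin m → ℝ) (hv : v ≠ 0) :
    0 < v ⬝ᵥ (M *ᵥ v) := by
  have := hM.dotProduct_mulVec_pos hv
  simpa using this

lemma dot_mulVec_symm (M : Matrix (Fin m) (Fin m) ℝ) (hsym : Mᵀ = M) (v w : Fin m → ℝ) :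
    v ⬝ᵥ (M *ᵥ w) = (M *ᵥ v) ⬝ᵥ w := by
  rw [Matrix.dotProduct_mulVec]
  conv_lhs => rw [← hsym, Matrix.vecMul_transpose]

lemma mulVec_eq_zero_of_psd (M : Matrix (Fin m) (Fin m) ℝ) (hsym : Mᵀ = M)
    (hpsd : ∀ w, 0 ≤ w ⬝ᵥ (M *ᵥ w)) (v : Fin m → ℝ) (hv : v ⬝ᵥ (M *ᵥ v) = 0) :
    M *ᵥ v = 0 := by
  have key : ∀ w : Fin m → ℝ, w ⬝ᵥ (M *ᵥ v) = 0 := by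
    intro w
    set a := w ⬝ᵥ (M *ᵥ v) with ha
    set b := w ⬝ᵥ (M *ᵥ w) with hb
    have hb0 : 0 ≤ b := hpsd w
    have hq : ∀ t : ℝ, 0 ≤ 2*t*a + t^2 * b := by
      intro t
      have h := hpsd (v + t • w)
      have hvw : v ⬝ᵥ (M *ᵥ w) = a := by
        rw [dot_mulVec_symm M hsym, dotProduct_comm]
      simp only [Matrix.mulVec_add, Matrix.mulVec_smul, add_dotProduct,
        dotProduct_add, dotProduct_smul, smul_dotProduct,
        smul_eq_mul] at h
      rw [hvw] at h
      nlinarith [h, hv]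
    have hb1 : (0:ℝ) < b + 1 := by linarith
    have h := hq (-(a/(b+1)))
    have h3 : (2*(-(a/(b+1)))*a + (-(a/(b+1)))^2*b) * (b+1)^2 = -(a^2*(b+2)) := by
      field_simp; ring
    have h2 : 0 ≤ (2*(-(a/(b+1)))*a + (-(a/(b+1)))^2*b) * (b+1)^2 := mul_nonneg h (by positivity)
    rw [h3] at h2
    have ha2 : a^2 ≤ 0 := by nlinarith
    have : a^2 = 0 := le_antisymm ha2 (sq_nonneg a)
    exact pow_eq_zero_iff two_ne_zero |>.mp this
  funext i
  have := key (Pi.single i 1)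
  rw [single_dotProduct, one_mul] at this
  simpa using this

lemma dot_smul_smul (M : Matrix (Fin m) (Fin m) ℝ) (c : ℝ) (v : Fin m → ℝ) :
    (c • v) ⬝ᵥ (M *ᵥ (c • v)) = c^2 * (v ⬝ᵥ (M *ᵥ v)) := by
  rw [Matrix.mulVec_smul, dotProduct_smul, smul_dotProduct]
  simp [smul_eq_mul]; ring

lemma exists_perturb (M E : Matrix (Fin m) (Fin m) ℝ) (hM : M.PosDef) (hMsym : Mᵀ = M)
    (hEsym : Eᵀ = E) :
    ∃ ε > 0, ∀ δ : ℝ, |δ| < ε → (M + δ • E).PosDef := by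
  rcases Nat.eq_zero_or_pos m with hm | hm
  · subst hm
    refine ⟨1, one_pos, fun δ _ => ⟨real_isHermitian (by ext i j; exact i.elim0), fun x hx => ?_⟩⟩
    exact absurd (Finsupp.ext fun i => i.elim0) hx
  · haveI : Nonempty (Fin m) := ⟨⟨0, hm⟩⟩
    have hconst : ((fun _ : Fin m => (1:ℝ)) : Fin m → ℝ) ∈ Metric.sphere (0 : Fin m → ℝ) 1 := by
      simp [pi_norm_const]
    have hfc : Continuous fun v : Fin m → ℝ => v ⬝ᵥ (M *ᵥ v) := by
      simp only [dotProduct, Matrix.mulVec]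
      exact continuous_finset_sum _ fun i _ => (continuous_apply i).mul
        (continuous_finset_sum _ fun j _ => continuous_const.mul (continuous_apply j))
    obtain ⟨v0, hv0S, hmin⟩ := (isCompact_sphere (0 : Fin m → ℝ) 1).exists_isMinOn
      ⟨_, hconst⟩ hfc.continuousOn
    have hv0norm : ‖v0‖ = 1 := by simpa using hv0S
    have hv0ne : v0 ≠ 0 := by
      intro h; rw [h] at hv0norm; simp at hv0norm
    have hlam : 0 < v0 ⬝ᵥ (M *ᵥ v0) := posDef_dot hM v0 hv0ne
    set lam := v0 ⬝ᵥ (M *ᵥ v0) with hlamdef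
    set K := ∑ i, ∑ j, |E i j| with hK
    have hK0 : 0 ≤ K := by positivity
    have hEbound : ∀ v : Fin m → ℝ, ‖v‖ = 1 → |v ⬝ᵥ (E *ᵥ v)| ≤ K := by
      intro v hv
      have hvi : ∀ i, |v i| ≤ 1 := by
        intro i
        have := norm_le_pi_norm v i
        rwa [hv, Real.norm_eq_abs] at this
      have : v ⬝ᵥ (E *ᵥ v) = ∑ i, ∑ j, v i * (E i j * v j) := by
        simp only [dotProduct, Matrix.mulVec, Finset.mul_sum]
      rw [this, hK]
      refine (Finset.abs_sum_le_sum_abs _ _).trans (Finset.sum_le_sum fun i _ => ?_)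
      refine (Finset.abs_sum_le_sum_abs _ _).trans (Finset.sum_le_sum fun j _ => ?_)
      rw [abs_mul, abs_mul]
      calc |v i| * (|E i j| * |v j|) ≤ 1 * (|E i j| * 1) := by
            apply mul_le_mul (hvi i) (mul_le_mul_of_nonneg_left (hvi j) (abs_nonneg _))
              (by positivity) one_pos.le
        _ = |E i j| := by ring
    refine ⟨lam / (K + 1), by positivity, fun δ hδ => ?_⟩
    have hherm : (M + δ • E)ᵀ = M + δ • E := by
      rw [Matrix.transpose_add, Matrix.transpose_smul, hMsym, hEsym]
    refine posDef_of _ hherm fun v hv => ?_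
    have hvn : 0 < ‖v‖ := norm_pos_iff.mpr hv
    set w := ‖v‖⁻¹ • v with hw
    have hwnorm : ‖w‖ = 1 := by
      rw [hw, norm_smul, Real.norm_eq_abs, abs_of_pos (inv_pos.mpr hvn), inv_mul_cancel₀ hvn.ne']
    have hvw : v = ‖v‖ • w := by
      rw [hw, smul_smul, mul_inv_cancel₀ hvn.ne', one_smul]
    have hwq : 0 < w ⬝ᵥ ((M + δ • E) *ᵥ w) := by
      have hexp : w ⬝ᵥ ((M + δ • E) *ᵥ w) = w ⬝ᵥ (M *ᵥ w) + δ * (w ⬝ᵥ (E *ᵥ w)) := by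
        rw [Matrix.add_mulVec, dotProduct_add, Matrix.smul_mulVec,
          dotProduct_smul, smul_eq_mul]
      have h1 : lam ≤ w ⬝ᵥ (M *ᵥ w) := hmin (by simpa using hwnorm)
      have h2 : |δ * (w ⬝ᵥ (E *ᵥ w))| ≤ |δ| * K := by
        rw [abs_mul]
        exact mul_le_mul_of_nonneg_left (hEbound w hwnorm) (abs_nonneg δ)
      have h3 : |δ| * K < lam := by
        have : |δ| * (K + 1) < lam / (K + 1) * (K + 1) := by
          apply mul_lt_mul_of_pos_right hδ (by positivity)
        rw [div_mul_cancel₀ _ (by positivity : (K:ℝ) + 1 ≠ 0)] at this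
        nlinarith [abs_nonneg δ]
      rw [hexp]
      have := abs_le.mp h2
      linarith [this.1]
    have hfin : v ⬝ᵥ ((M + δ • E) *ᵥ v) = ‖v‖^2 * (w ⬝ᵥ ((M + δ • E) *ᵥ w)) := by
      conv_lhs => rw [hvw]
      rw [dot_smul_smul]
    rw [hfin]
    exact mul_pos (pow_pos hvn 2) hwq

end PD

lemma path_posdef {m : ℕ} (A D : Matrix (Fin m) (Fin m) ℝ) (hA : A.PosDef) (hDsym : Dᵀ = D)
    (hns : ∀ t ∈ Set.Icc (0:ℝ) 1, ∀ v : Fin m → ℝ, (A + t • D) *ᵥ v = 0 → v = 0) :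
    (A + D).PosDef := by
  have hAsym : Aᵀ = A := by
    have := hA.1
    rwa [Matrix.IsHermitian, Matrix.conjTranspose_eq_transpose_of_trivial] at this
  have hsymt : ∀ t : ℝ, (A + t • D)ᵀ = A + t • D := fun t => by
    rw [Matrix.transpose_add, Matrix.transpose_smul, hAsym, hDsym]
  set T : Set ℝ := {t | t ∈ Set.Icc (0:ℝ) 1 ∧ (A + t • D).PosDef} with hT
  have h0T : (0:ℝ) ∈ T := by
    refine ⟨⟨le_refl 0, zero_le_one⟩, ?_⟩
    simpa using hA
  have hbdd : BddAbove T := ⟨1, fun t ht => ht.1.2⟩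
  set s := sSup T with hs
  have hsmem : s ∈ Set.Icc (0:ℝ) 1 :=
    ⟨le_csSup hbdd h0T, csSup_le ⟨0, h0T⟩ fun t ht => ht.1.2⟩
  have hclos : s ∈ closure T := csSup_mem_closure ⟨0, h0T⟩ hbdd
  have hpsd : ∀ v : Fin m → ℝ, 0 ≤ v ⬝ᵥ ((A + s • D) *ᵥ v) := by
    intro v
    set g : ℝ → ℝ := fun t => v ⬝ᵥ ((A + t • D) *ᵥ v) with hg
    have hgc : Continuous g := by
      have hgeq : g = fun t => v ⬝ᵥ (A *ᵥ v) + t * (v ⬝ᵥ (D *ᵥ v)) := by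
        funext t
        simp [hg, Matrix.add_mulVec, Matrix.smul_mulVec, dotProduct_add,
          dotProduct_smul, smul_eq_mul]
      rw [hgeq]
      exact continuous_const.add (continuous_id.mul continuous_const)
    have hsub : T ⊆ g ⁻¹' Set.Ici 0 := by
      intro t ht
      rcases eq_or_ne v 0 with rfl | hv
      · simp [hg, Set.mem_preimage]
      · exact Set.mem_preimage.mpr (le_of_lt (posDef_dot ht.2 v hv))
    exact closure_minimal hsub (isClosed_Ici.preimage hgc) hclos
  have hsposdef : (A + s • D).PosDef := by
    refine posDef_of _ (hsymt s) fun v hv => ?_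
    rcases lt_or_eq_of_le (hpsd v) with h | h
    · exact h
    · exact absurd (hns s hsmem v (mulVec_eq_zero_of_psd _ (hsymt s) hpsd v h.symm)) hv
  have hsT : s ∈ T := ⟨hsmem, hsposdef⟩
  rcases eq_or_lt_of_le hsmem.2 with h1 | h1
  · rw [h1, one_smul] at hsposdef
    exact hsposdef
  · exfalso
    obtain ⟨ε, hε, hpert⟩ := exists_perturb (A + s • D) D hsposdef (hsymt s) hDsym
    set δ := min (ε/2) (1 - s) with hδ
    have hδpos : 0 < δ := lt_min (by linarith) (by linarith)
    have hδ1 : δ ≤ 1 - s := min_le_right _ _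
    have hδε : δ < ε := lt_of_le_of_lt (min_le_left _ _) (by linarith)
    have hnew : s + δ ∈ T := by
      refine ⟨⟨by linarith [hsmem.1], by linarith⟩, ?_⟩
      have hp := hpert δ (by rwa [abs_of_pos hδpos])
      have : A + (s + δ) • D = A + s • D + δ • D := by
        rw [add_smul, ← add_assoc]
      rwa [this]
    linarith [le_csSup hbdd hnew]

lemma jordan_comm {ι : Type*} [Fintype ι] (A B : Matrix ι ι ℝ) : jordan A B = jordan B A := by
  rw [jordan, jordan, add_comm]

lemma dot_jordan_zero {m : ℕ} (A B : Matrix (Fin m) (Fin m) ℝ) (v : Fin m → ℝ)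
    (h1 : v ⬝ᵥ (A *ᵥ (B *ᵥ v)) = 0) (h2 : v ⬝ᵥ (B *ᵥ (A *ᵥ v)) = 0) :
    v ⬝ᵥ (jordan A B *ᵥ v) = 0 := by
  simp only [jordan, Matrix.smul_mulVec, Matrix.add_mulVec, ← Matrix.mulVec_mulVec,
    dotProduct_smul, dotProduct_add, h1, h2, smul_eq_mul]
  ring

lemma main_aux {m : ℕ} (X Y ΔX ΔY : Matrix (Fin m) (Fin m) ℝ)
    (hX : X.PosDef) (hY : Y.PosDef) (hΔX : ΔXᵀ = ΔX) (hΔY : ΔYᵀ = ΔY)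
    (μ μh : ℝ) (hμ : 0 < μ) (hμh : 0 < μh)
    (e2 : frobNorm (jordan X Y - μ • (1 : Matrix (Fin m) (Fin m) ℝ)) < μ)
    (e1 : frobNorm (jordan ΔX ΔY) +
      frobNorm (jordan X Y + jordan X ΔY + jordan Y ΔX - μh • (1 : Matrix (Fin m) (Fin m) ℝ))
      < μh) :
    (X + ΔX).PosDef ∧ (Y + ΔY).PosDef := by
  have hXsym : Xᵀ = X := by
    have := hX.1
    rwa [Matrix.IsHermitian, Matrix.conjTranspose_eq_transpose_of_trivial] at this
  have hYsym : Yᵀ = Y := by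
    have := hY.1
    rwa [Matrix.IsHermitian, Matrix.conjTranspose_eq_transpose_of_trivial] at this
  set P := jordan X Y - μ • (1 : Matrix (Fin m) (Fin m) ℝ) with hP
  set Q := jordan X Y + jordan X ΔY + jordan Y ΔX - μh • (1 : Matrix (Fin m) (Fin m) ℝ) with hQ
  set R := jordan ΔX ΔY with hR
  have key : ∀ t ∈ Set.Icc (0:ℝ) 1, ∀ v : Fin m → ℝ,
      ((X + t • ΔX) *ᵥ v = 0 ∨ (Y + t • ΔY) *ᵥ v = 0) → v = 0 := by
    rintro t ⟨ht0, ht1⟩ v hv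
    have hAtsym : (X + t • ΔX)ᵀ = X + t • ΔX := by
      rw [Matrix.transpose_add, Matrix.transpose_smul, hXsym, hΔX]
    have hBtsym : (Y + t • ΔY)ᵀ = Y + t • ΔY := by
      rw [Matrix.transpose_add, Matrix.transpose_smul, hYsym, hΔY]
    set ν := (1-t)*μ + t*μh with hν
    have hνpos : 0 < ν := by
      rcases lt_or_ge t 1 with h | h
      · have h1 := mul_pos (by linarith : (0:ℝ) < 1 - t) hμ
        have h2 := mul_nonneg ht0 hμh.le
        rw [hν]; linarith
      · have h1 := mul_pos (lt_of_lt_of_le one_pos h) hμh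
        have h2 : (1-t)*μ = 0 := by have : t = 1 := le_antisymm ht1 h; rw [this]; ring
        rw [hν]; linarith
    have hid : jordan (X + t • ΔX) (Y + t • ΔY) - ν • (1 : Matrix (Fin m) (Fin m) ℝ) =
        (1-t) • P + t • Q + (t^2) • R := by
      rw [hP, hQ, hR, hν]
      simp only [jordan, Matrix.add_mul, Matrix.mul_add, Matrix.smul_mul, Matrix.mul_smul,
        smul_add, smul_sub, smul_smul, add_smul, sub_smul, one_smul]
      module
    have hfrob : frobNorm (jordan (X + t • ΔX) (Y + t • ΔY) - ν • (1 : Matrix (Fin m) (Fin m) ℝ)) < ν := by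
      rw [hid]
      have htri : frobNorm ((1-t) • P + t • Q + (t^2) • R) ≤
          (1-t) * frobNorm P + t * frobNorm Q + t^2 * frobNorm R := by
        calc frobNorm ((1-t) • P + t • Q + (t^2) • R)
            ≤ frobNorm ((1-t) • P + t • Q) + frobNorm ((t^2) • R) := frobNorm_add_le _ _
          _ ≤ frobNorm ((1-t) • P) + frobNorm (t • Q) + frobNorm ((t^2) • R) := by
              linarith [frobNorm_add_le ((1-t) • P) (t • Q)]
          _ = (1-t) * frobNorm P + t * frobNorm Q + t^2 * frobNorm R := by
              rw [frobNorm_smul, frobNorm_smul, frobNorm_smul, abs_of_nonneg (by linarith : (0:ℝ) ≤ 1 - t),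
                abs_of_nonneg ht0, abs_of_nonneg (sq_nonneg t)]
    -- arithmetic
      have ha := frobNorm_nonneg P
      have hb := frobNorm_nonneg Q
      have hc := frobNorm_nonneg R
      have ht2 : t^2 ≤ t := by nlinarith
      rcases le_or_gt t (1/2) with hhalf | hhalf
      · have k1 : (1/2 : ℝ) * (μ - frobNorm P) ≤ (1-t) * (μ - frobNorm P) := by
          apply mul_le_mul_of_nonneg_right (by linarith) (by linarith)
        have k2 : 0 ≤ t * (μh - frobNorm Q - frobNorm R) := mul_nonneg ht0 (by linarith)
        have k3 : t^2 * frobNorm R ≤ t * frobNorm R := mul_le_mul_of_nonneg_right ht2 hc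
        rw [hν]; nlinarith
      · have k1 : 0 ≤ (1-t) * (μ - frobNorm P) := mul_nonneg (by linarith) (by linarith)
        have k2 : (1/2 : ℝ) * (μh - frobNorm Q - frobNorm R) ≤ t * (μh - frobNorm Q - frobNorm R) := by
          apply mul_le_mul_of_nonneg_right (by linarith) (by linarith)
        have k3 : t^2 * frobNorm R ≤ t * frobNorm R := mul_le_mul_of_nonneg_right ht2 hc
        rw [hν]; nlinarith
    -- quadratic form vanishes
    have hq0 : v ⬝ᵥ (jordan (X + t • ΔX) (Y + t • ΔY) *ᵥ v) = 0 := by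
      rcases hv with hAv | hBv
      · have h1 : v ⬝ᵥ ((X + t • ΔX) *ᵥ ((Y + t • ΔY) *ᵥ v)) = 0 := by
          rw [dot_mulVec_symm _ hAtsym, hAv, zero_dotProduct]
        have h2 : v ⬝ᵥ ((Y + t • ΔY) *ᵥ ((X + t • ΔX) *ᵥ v)) = 0 := by
          rw [hAv, Matrix.mulVec_zero, dotProduct_zero]
        exact dot_jordan_zero _ _ _ h1 h2
      · have h1 : v ⬝ᵥ ((X + t • ΔX) *ᵥ ((Y + t • ΔY) *ᵥ v)) = 0 := by
          rw [hBv, Matrix.mulVec_zero, dotProduct_zero]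
        have h2 : v ⬝ᵥ ((Y + t • ΔY) *ᵥ ((X + t • ΔX) *ᵥ v)) = 0 := by
          rw [dot_mulVec_symm _ hBtsym, hBv, zero_dotProduct]
        exact dot_jordan_zero _ _ _ h1 h2
    have hcomp : v ⬝ᵥ ((jordan (X + t • ΔX) (Y + t • ΔY) - ν • (1 : Matrix (Fin m) (Fin m) ℝ)) *ᵥ v)
        = -(ν * ∑ i, v i ^ 2) := by
      rw [Matrix.sub_mulVec, dotProduct_sub, hq0, Matrix.smul_mulVec,
        Matrix.one_mulVec, dotProduct_smul, smul_eq_mul]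
      have : v ⬝ᵥ v = ∑ i, v i ^ 2 := by
        simp [dotProduct, sq]
      rw [this]; ring
    have habs := abs_dot_le (jordan (X + t • ΔX) (Y + t • ΔY) - ν • (1 : Matrix (Fin m) (Fin m) ℝ)) v
    rw [hcomp, abs_neg, abs_of_nonneg (mul_nonneg hνpos.le (by positivity))] at habs
    have hS : (0:ℝ) ≤ ∑ i, v i ^ 2 := by positivity
    have hS0 : ∑ i, v i ^ 2 = 0 := by nlinarith
    have hall := (Finset.sum_eq_zero_iff_of_nonneg (fun i _ => sq_nonneg (v i))).mp hS0
    funext i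
    exact pow_eq_zero_iff two_ne_zero |>.mp (hall i (Finset.mem_univ i))
  constructor
  · exact path_posdef X ΔX hX hΔX fun t ht v hv => key t ht v (Or.inl hv)
  · exact path_posdef Y ΔY hY hΔY fun t ht v hv => key t ht v (Or.inr hv)

/-- eventual positive definiteness of X_r + ΔX_r and Y_r + ΔY_r under
the stated centrality and step-size conditions. -/
theorem step_preserves_posdef {m : ℕ} (ζ ζh : ℝ)
    (hζ0 : 0 < ζ) (hζ1 : ζ < 1) (hζh0 : 0 < ζh) (hζh1 : ζh < 1)
    (X Y ΔX ΔY : ℕ → Matrix (Fin m) (Fin m) ℝ)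
    (hX : ∀ r, (X r).PosDef) (hY : ∀ r, (Y r).PosDef)
    (hΔX : ∀ r, (ΔX r).IsSymm) (hΔY : ∀ r, (ΔY r).IsSymm)
    (μ μh : ℕ → ℝ) (hμpos : ∀ r, 0 < μ r) (hμhpos : ∀ r, 0 < μh r)
    (hμ0 : Tendsto μ atTop (𝓝 0)) (hμh0 : Tendsto μh atTop (𝓝 0))
    (C : ℝ) (hC : 0 < C)
    (h1 : ∀ r, frobNorm (jordan (ΔX r) (ΔY r)) ≤ C * μ r ^ 2)
    (h2 : ∀ r, frobNorm (jordan (X r) (Y r) - μ r • (1 : Matrix (Fin m) (Fin m) ℝ))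
        ≤ C * μ r ^ (1 + ζ))
    (h3 : ∀ r, frobNorm (jordan (X r) (Y r) + jordan (X r) (ΔY r) + jordan (Y r) (ΔX r)
        - μh r • (1 : Matrix (Fin m) (Fin m) ℝ)) ≤ C * μh r ^ (1 + ζh))
    (h4 : Tendsto (fun r => μ r ^ 2 / μh r) atTop (𝓝 0)) :
    ∀ᶠ r in atTop, (X r + ΔX r).PosDef ∧ (Y r + ΔY r).PosDef := by
  have hev1 : ∀ᶠ r in atTop, C * μ r ^ (1+ζ) < μ r := by
    have hδ : (0:ℝ) < (C⁻¹) ^ (ζ⁻¹) := Real.rpow_pos_of_pos (inv_pos.mpr hC) _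
    filter_upwards [hμ0.eventually_lt_const hδ] with r hr
    have hp1 : μ r ^ ζ < ((C⁻¹) ^ (ζ⁻¹)) ^ ζ := Real.rpow_lt_rpow (hμpos r).le hr hζ0
    rw [← Real.rpow_mul (inv_pos.mpr hC).le, inv_mul_cancel₀ hζ0.ne', Real.rpow_one] at hp1
    have hp2 : C * μ r ^ ζ < 1 := by
      have := mul_lt_mul_of_pos_left hp1 hC
      rwa [mul_inv_cancel₀ hC.ne'] at this
    calc C * μ r ^ (1+ζ) = (C * μ r ^ ζ) * μ r := by
          rw [Real.rpow_add (hμpos r), Real.rpow_one]; ring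
      _ < 1 * μ r := mul_lt_mul_of_pos_right hp2 (hμpos r)
      _ = μ r := one_mul _
  have hev2a : ∀ᶠ r in atTop, C * μh r ^ (1+ζh) < 2⁻¹ * μh r := by
    have h2C : (0:ℝ) < (2*C)⁻¹ := by positivity
    have hδ : (0:ℝ) < ((2*C)⁻¹) ^ (ζh⁻¹) := Real.rpow_pos_of_pos h2C _
    filter_upwards [hμh0.eventually_lt_const hδ] with r hr
    have hp1 : μh r ^ ζh < (((2*C)⁻¹) ^ (ζh⁻¹)) ^ ζh := Real.rpow_lt_rpow (hμhpos r).le hr hζh0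
    rw [← Real.rpow_mul h2C.le, inv_mul_cancel₀ hζh0.ne', Real.rpow_one] at hp1
    have hp2 : C * μh r ^ ζh < 2⁻¹ := by
      have := mul_lt_mul_of_pos_left hp1 hC
      have hcc : C * (2*C)⁻¹ = 2⁻¹ := by field_simp
      rwa [hcc] at this
    calc C * μh r ^ (1+ζh) = (C * μh r ^ ζh) * μh r := by
          rw [Real.rpow_add (hμhpos r), Real.rpow_one]; ring
      _ < 2⁻¹ * μh r := mul_lt_mul_of_pos_right hp2 (hμhpos r)
  have hev2b : ∀ᶠ r in atTop, C * μ r ^ 2 < 2⁻¹ * μh r := by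
    have h2C : (0:ℝ) < (2*C)⁻¹ := by positivity
    filter_upwards [h4.eventually_lt_const h2C] with r hr
    have hmm : μ r ^ 2 = (μ r ^ 2 / μh r) * μh r := by
      rw [div_mul_cancel₀ _ (hμhpos r).ne']
    rw [hmm, ← mul_assoc]
    apply mul_lt_mul_of_pos_right _ (hμhpos r)
    have := mul_lt_mul_of_pos_left hr hC
    have hcc : C * (2*C)⁻¹ = 2⁻¹ := by field_simp
    rwa [hcc] at this
  filter_upwards [hev1, hev2a, hev2b] with r k1 k2a k2b
  refine main_aux (X r) (Y r) (ΔX r) (ΔY r) (hX r) (hY r) (hΔX r) (hΔY r)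
    (μ r) (μh r) (hμpos r) (hμhpos r) (lt_of_le_of_lt (h2 r) k1) ?_
  have := h1 r
  have := h3 r
  linarith
end

section
/- Let X ∈ S^m_+, Y ∈ S^m, and μ ≥ 0. Then ‖XY − YX‖_F ≤ 2‖X∘Y − μI‖_F. -/
open Matrix

lemma trace_sum_form {m : ℕ} (A B : Matrix (Fin m) (Fin m) ℝ) :
    Matrix.trace (A * B) = ∑ i, ∑ j, A i j * B j i := by
  simp [Matrix.trace, Matrix.mul_apply, Matrix.diag]

lemma key_sum_ineq {m : ℕ} (A : Matrix (Fin m) (Fin m) ℝ)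
    (h : 0 ≤ ∑ i, ∑ j, A i j * A j i) :
    ∑ i, ∑ j, ((A - Aᵀ) i j) ^ 2 ≤ ∑ i, ∑ j, ((A + Aᵀ) i j) ^ 2 := by
  have hdiff : ∑ i, ∑ j, ((A + Aᵀ) i j) ^ 2 - ∑ i, ∑ j, ((A - Aᵀ) i j) ^ 2
      = 4 * ∑ i, ∑ j, A i j * A j i := by
    rw [← Finset.sum_sub_distrib, Finset.mul_sum]
    refine Finset.sum_congr rfl fun i _ => ?_
    rw [← Finset.sum_sub_distrib, Finset.mul_sum]
    refine Finset.sum_congr rfl fun j _ => ?_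
    simp only [Matrix.add_apply, Matrix.sub_apply, Matrix.transpose_apply]
    ring
  linarith

/-- ‖XY − YX‖_F ≤ 2‖X∘Y − μI‖_F for X psd, Y symmetric, μ ≥ 0. -/
theorem commutator_frob_bound {m : ℕ} (X Y : Matrix (Fin m) (Fin m) ℝ)
    (hX : X.PosSemidef) (hY : Y.IsSymm) (μ : ℝ) (hμ : 0 ≤ μ) :
    frobNorm (X * Y - Y * X) ≤ 2 * frobNorm (jordan X Y - μ • (1 : Matrix (Fin m) (Fin m) ℝ)) := by
  obtain ⟨S, hSsymm, hSS⟩ : ∃ S : Matrix (Fin m) (Fin m) ℝ, Sᵀ = S ∧ S * S = X := by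
    open scoped MatrixOrder in
    refine ⟨CFC.sqrt X, ?_, CFC.sqrt_mul_sqrt_self X hX.nonneg⟩
    open scoped MatrixOrder in
    have := (CFC.sqrt_nonneg X).posSemidef.isHermitian
    rwa [Matrix.IsHermitian, Matrix.conjTranspose_eq_transpose_of_trivial] at this
  have hXsymm : Xᵀ = X := by
    have := hX.isHermitian
    rwa [Matrix.IsHermitian, Matrix.conjTranspose_eq_transpose_of_trivial] at this
  have hYsymm : Yᵀ = Y := hY
  set A : Matrix (Fin m) (Fin m) ℝ := X * Y - μ • 1 with hA
  have hAT : Aᵀ = Y * X - μ • 1 := by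
    simp [hA, Matrix.transpose_mul, hXsymm, hYsymm, Matrix.transpose_smul]
  set B : Matrix (Fin m) (Fin m) ℝ := S * Y * S - μ • 1 with hB
  have hBsymm : Bᵀ = B := by
    simp [hB, Matrix.transpose_mul, hSsymm, hYsymm, Matrix.transpose_smul, Matrix.mul_assoc]
  -- trace identity : trace (A*A) = trace (B*B)
  have htrace : Matrix.trace (A * A) = Matrix.trace (B * B) := by
    have e1 : A * A = X * Y * (X * Y) - μ • (X * Y) - μ • (X * Y) + (μ * μ) • 1 := by
      simp only [hA, sub_mul, mul_sub, Matrix.smul_mul, Matrix.mul_smul, smul_smul,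
        Matrix.one_mul, Matrix.mul_one]
      abel
    have e2 : B * B = S * Y * S * (S * Y * S) - μ • (S * Y * S) - μ • (S * Y * S)
        + (μ * μ) • 1 := by
      simp only [hB, sub_mul, mul_sub, Matrix.smul_mul, Matrix.mul_smul, smul_smul,
        Matrix.one_mul, Matrix.mul_one]
      abel
    have t1 : Matrix.trace (S * Y * S * (S * Y * S)) = Matrix.trace (X * Y * (X * Y)) := by
      rw [show S * Y * S * (S * Y * S) = S * (Y * (S * S) * Y * S) by
        simp only [Matrix.mul_assoc]]
      rw [Matrix.trace_mul_comm]
      rw [show Y * (S * S) * Y * S * S = Y * X * (Y * X) by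
        simp only [Matrix.mul_assoc, hSS]]
      rw [show X * Y * (X * Y) = X * (Y * (X * Y)) by simp only [Matrix.mul_assoc]]
      rw [Matrix.trace_mul_comm X]
      simp only [Matrix.mul_assoc]
    have t2 : Matrix.trace (S * Y * S) = Matrix.trace (X * Y) := by
      rw [Matrix.trace_mul_comm, ← Matrix.mul_assoc, hSS, Matrix.trace_mul_comm]
    rw [e1, e2]
    simp only [Matrix.trace_add, Matrix.trace_sub, Matrix.trace_smul, t1, t2]
  -- nonnegativity of trace (A*A)
  have htrB : 0 ≤ Matrix.trace (B * B) := by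
    rw [trace_sum_form]
    have hS2 : ∀ i j, B i j * B j i = (B i j) ^ 2 := by
      intro i j
      have hji : B j i = Bᵀ i j := rfl
      rw [hji, hBsymm]; ring
    rw [Finset.sum_congr rfl fun i _ => Finset.sum_congr rfl fun j _ => hS2 i j]
    exact Finset.sum_nonneg fun i _ => Finset.sum_nonneg fun j _ => sq_nonneg _
  have hkey : 0 ≤ ∑ i, ∑ j, A i j * A j i := by
    rw [← trace_sum_form, htrace]; exact htrB
  have hsum := key_sum_ineq A hkey
  -- rewrite both sides
  have hL : X * Y - Y * X = A - Aᵀ := by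
    rw [hAT, hA]; abel
  have hR : jordan X Y - μ • (1 : Matrix (Fin m) (Fin m) ℝ) = (2:ℝ)⁻¹ • (A + Aᵀ) := by
    rw [hAT, hA, jordan]
    module
  rw [hL, hR, frobNorm, frobNorm]
  have hnn : 0 ≤ ∑ i, ∑ j, ((A + Aᵀ) i j) ^ 2 :=
    Finset.sum_nonneg fun i _ => Finset.sum_nonneg fun j _ => sq_nonneg _
  have hscale : ∑ i, ∑ j, (((2:ℝ)⁻¹ • (A + Aᵀ)) i j) ^ 2
      = ((2:ℝ)⁻¹) ^ 2 * ∑ i, ∑ j, ((A + Aᵀ) i j) ^ 2 := by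
    rw [Finset.mul_sum]
    refine Finset.sum_congr rfl fun i _ => ?_
    rw [Finset.mul_sum]
    refine Finset.sum_congr rfl fun j _ => ?_
    rw [Matrix.smul_apply, smul_eq_mul, mul_pow]
  rw [hscale, Real.sqrt_mul (by positivity), Real.sqrt_sq (by norm_num)]
  rw [show (2:ℝ) * ((2:ℝ)⁻¹ * Real.sqrt (∑ i, ∑ j, ((A + Aᵀ) i j) ^ 2))
      = Real.sqrt (∑ i, ∑ j, ((A + Aᵀ) i j) ^ 2) by ring]
  exact Real.sqrt_le_sqrt hsum
end

section
/- Let X ∈ S^m_{++} and ΔX ∈ S^m, and let X^{1/2} denote the positive definite square root of X. Set λ := λ_min(X^{-1/2}·ΔX·X^{-1/2}). If λ < 0, then sup{s ∈ ℝ : s ≥ 0 and X + s·ΔX ∈ S^m_+} = −1/λ (in particular this set is bounded above); if λ ≥ 0, then X + s·ΔX ∈ S^m_+ for every s ≥ 0. -/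
open scoped ComplexOrder in
/-- The positive semidefinite square root of a positive semidefinite matrix
(the definition of `Matrix.PosSemidef.sqrt` from the older Mathlib, since removed). -/
noncomputable def Matrix.PosSemidef.sqrt {n 𝕜 : Type*} [Fintype n] [DecidableEq n] [RCLike 𝕜]
    {A : Matrix n n 𝕜} (hA : A.PosSemidef) : Matrix n n 𝕜 :=
  hA.1.eigenvectorUnitary.1 * Matrix.diagonal ((↑) ∘ (√·) ∘ hA.1.eigenvalues) *
  (star hA.1.eigenvectorUnitary : Matrix n n 𝕜)

open Matrix

private lemma conj_conj_aux {m : ℕ} (A B C : Matrix (Fin m) (Fin m) ℝ)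
    (h1 : A * B = 1) (h2 : B * A = 1) : B * (A * C * A) * B = C := by
  calc B * (A * C * A) * B = (B * A) * C * (A * B) := by simp only [mul_assoc]
  _ = C := by rw [h1, h2, one_mul, mul_one]

/-- the maximal feasible step length keeping `X + s·ΔX` positive semidefinite
is `−1/λ` when `λ := λ_min(X^{-1/2}·ΔX·X^{-1/2}) < 0`, and is infinite when `λ ≥ 0`. -/
theorem max_step_length {m : ℕ} (X ΔX : Matrix (Fin m) (Fin m) ℝ)
    (hX : X.PosDef) (hΔX : ΔX.IsSymm)
    (lam : ℝ)
    (hEig : ∃ v : Fin m → ℝ, v ≠ 0 ∧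
      ((hX.posSemidef.sqrt)⁻¹ * ΔX * (hX.posSemidef.sqrt)⁻¹).mulVec v = lam • v)
    (hMin : ∀ t : ℝ, (∃ w : Fin m → ℝ, w ≠ 0 ∧
      ((hX.posSemidef.sqrt)⁻¹ * ΔX * (hX.posSemidef.sqrt)⁻¹).mulVec w = t • w) → lam ≤ t) :
    (lam < 0 → IsLUB {s : ℝ | 0 ≤ s ∧ (X + s • ΔX).PosSemidef} (-1 / lam)) ∧
    (0 ≤ lam → ∀ s : ℝ, 0 ≤ s → (X + s • ΔX).PosSemidef) := by
  classical
  set S := hX.posSemidef.sqrt with hSdef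
  have hSpsd : S.PosSemidef := by
    rw [hSdef, Matrix.PosSemidef.sqrt, star_eq_conjTranspose]
    apply PosSemidef.mul_mul_conjTranspose_same
    rw [posSemidef_diagonal_iff]
    intro i
    simp [Real.sqrt_nonneg]
  have hSsym : S.IsHermitian := hSpsd.1
  have hSS : S * S = X := by
    rw [hSdef, Matrix.PosSemidef.sqrt]
    conv_rhs => rw [hX.posSemidef.1.spectral_theorem, Unitary.conjStarAlgAut_apply]
    have hU : (star hX.posSemidef.1.eigenvectorUnitary : Matrix (Fin m) (Fin m) ℝ) *
        (hX.posSemidef.1.eigenvectorUnitary : Matrix (Fin m) (Fin m) ℝ) = 1 :=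
      Matrix.mem_unitaryGroup_iff'.mp hX.posSemidef.1.eigenvectorUnitary.2
    calc _ = (hX.posSemidef.1.eigenvectorUnitary : Matrix (Fin m) (Fin m) ℝ) *
          (Matrix.diagonal (RCLike.ofReal ∘ (√·) ∘ hX.posSemidef.1.eigenvalues) *
          ((star hX.posSemidef.1.eigenvectorUnitary : Matrix (Fin m) (Fin m) ℝ) *
          (hX.posSemidef.1.eigenvectorUnitary : Matrix (Fin m) (Fin m) ℝ)) *
          Matrix.diagonal (RCLike.ofReal ∘ (√·) ∘ hX.posSemidef.1.eigenvalues)) *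
          (star hX.posSemidef.1.eigenvectorUnitary : Matrix (Fin m) (Fin m) ℝ) := by
            simp only [mul_assoc]
      _ = _ := by
        rw [hU, mul_one, diagonal_mul_diagonal]
        congr 2
        congr 1
        funext i
        simp [Real.mul_self_sqrt (hX.posSemidef.eigenvalues_nonneg i)]
  have hdet : IsUnit S.det := by
    refine isUnit_iff_ne_zero.mpr fun h => ?_
    have : S.det * S.det = X.det := by rw [← det_mul, hSS]
    rw [h, mul_zero] at this
    exact hX.det_pos.ne' this.symm
  have hSiS : S⁻¹ * S = 1 := nonsing_inv_mul S hdet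
  have hSSi : S * S⁻¹ = 1 := mul_nonsing_inv S hdet
  have hSiH : (S⁻¹).IsHermitian := by
    rw [Matrix.IsHermitian, conjTranspose_nonsing_inv, hSsym.eq]
  have hΔH : ΔX.IsHermitian := by
    rw [Matrix.IsHermitian, conjTranspose_eq_transpose_of_trivial]
    exact hΔX
  set M := S⁻¹ * ΔX * S⁻¹ with hMdef
  have hM : M.IsHermitian := by
    rw [hMdef, Matrix.IsHermitian, conjTranspose_mul, conjTranspose_mul, hSiH.eq, hΔH.eq,
      mul_assoc]
  have hSMS : S * M * S = ΔX := conj_conj_aux S⁻¹ S ΔX hSiS hSSi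
  have key : ∀ s : ℝ, X + s • ΔX = S * (1 + s • M) * S := by
    intro s
    rw [mul_add, add_mul, mul_one, hSS, mul_smul_comm, smul_mul_assoc, hSMS]
  -- the congruence equivalence
  have equiv1 : ∀ s : ℝ, (X + s • ΔX).PosSemidef ↔ (1 + s • M).PosSemidef := by
    intro s
    constructor
    · intro h
      have h2 := h.mul_mul_conjTranspose_same S⁻¹
      rw [hSiH.eq, key s, conj_conj_aux S S⁻¹ _ hSSi hSiS] at h2
      exact h2
    · intro h
      have h2 := h.mul_mul_conjTranspose_same S
      rw [hSsym.eq, ← key s] at h2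
      exact h2
  -- eigenvalue comparison
  have hle : ∀ i : Fin m, lam ≤ hM.eigenvalues i := by
    intro i
    refine hMin _ ⟨⇑(hM.eigenvectorBasis i), ?_, hM.mulVec_eigenvectorBasis i⟩
    intro h0
    refine hM.eigenvectorBasis.toBasis.ne_zero i ?_
    rw [OrthonormalBasis.coe_toBasis]
    ext j
    exact congrFun h0 j
  -- key scalar characterization for s ≥ 0
  have cond : ∀ s : ℝ, 0 ≤ s → ((1 + s • M).PosSemidef ↔ 0 ≤ 1 + s * lam) := by
    intro s hs
    constructor
    · intro h
      obtain ⟨v, hv, hveq⟩ := hEig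
      have hvec : (1 + s • M) *ᵥ v = (1 + s * lam) • v := by
        rw [add_mulVec, one_mulVec, smul_mulVec, hveq]
        ext j
        simp only [Pi.add_apply, Pi.smul_apply, smul_eq_mul]
        ring
      have h2 := h.dotProduct_mulVec_nonneg v
      rw [hvec] at h2
      have hvv : 0 < dotProduct v v := by
        rcases lt_or_eq_of_le (Finset.sum_nonneg fun i _ => mul_self_nonneg (v i)) with h' | h'
        · exact h'
        · exact absurd (dotProduct_self_eq_zero.mp h'.symm) hv
      have hsv : star v = v := by ext j; simp
      rw [hsv, dotProduct_smul, smul_eq_mul] at h2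
      nlinarith [h2, hvv]
    · intro h
      have hspec := hM.spectral_theorem
      have hdiag : (1 : Matrix (Fin m) (Fin m) ℝ) + s • M =
          (hM.eigenvectorUnitary : Matrix (Fin m) (Fin m) ℝ) *
            diagonal (fun i => 1 + s * hM.eigenvalues i) *
            (star hM.eigenvectorUnitary : Matrix (Fin m) (Fin m) ℝ) := by
        have hU : (hM.eigenvectorUnitary : Matrix (Fin m) (Fin m) ℝ) *
            (star hM.eigenvectorUnitary : Matrix (Fin m) (Fin m) ℝ) = 1 :=
          Matrix.mem_unitaryGroup_iff.mp hM.eigenvectorUnitary.2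
        have : diagonal (fun i => 1 + s * hM.eigenvalues i) =
            1 + s • diagonal (RCLike.ofReal ∘ hM.eigenvalues) := by
          rw [← diagonal_one, ← diagonal_smul, ← diagonal_add]
          congr 1 with i
        rw [this, mul_add, add_mul, mul_one, hU, mul_smul_comm, smul_mul_assoc, ← (hspec.trans (Unitary.conjStarAlgAut_apply _ _))]
      rw [hdiag]
      have hpsd : (diagonal (fun i => 1 + s * hM.eigenvalues i)).PosSemidef := by
        refine posSemidef_diagonal_iff.mpr fun i => ?_
        nlinarith [hle i, mul_le_mul_of_nonneg_left (hle i) hs]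
      have := hpsd.mul_mul_conjTranspose_same
        (hM.eigenvectorUnitary : Matrix (Fin m) (Fin m) ℝ)
      rwa [star_eq_conjTranspose]
  have cond' : ∀ s : ℝ, 0 ≤ s → ((X + s • ΔX).PosSemidef ↔ 0 ≤ 1 + s * lam) := by
    intro s hs
    rw [equiv1 s, cond s hs]
  constructor
  · intro hlam
    have hne : lam ≠ 0 := hlam.ne
    have hpos : 0 ≤ -1 / lam := by
      rw [neg_div, neg_nonneg]
      exact div_nonpos_of_nonneg_of_nonpos zero_le_one hlam.le
    refine IsGreatest.isLUB ⟨⟨hpos, ?_⟩, ?_⟩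
    · refine (cond' _ hpos).mpr ?_
      rw [div_mul_cancel₀ _ hne]
      norm_num
    · rintro x ⟨hx0, hx⟩
      have hx1 := (cond' x hx0).mp hx
      rw [le_div_iff_of_neg hlam]
      nlinarith
  · intro hlam s hs
    refine (cond' s hs).mpr ?_
    nlinarith
end
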